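/- arXiv:0709.3316 — 2 statements merged into one kernel-verified Lean document; each statement's English description precedes it below -/
import Mathlib

section
/- Let β > 0 and p a positive integer. The probability Ψ_β(p,0) that the β-biased monotonic random walk starting at the origin returns to meet the line y = px after departure equals 2(1 − (β/(β+1)) · (1/Φ_β(p,0))). In particular, if β ≥ p, then Ψ_β(p,0) = 2/(β+1). -/
/-- A monotonic lattice path with `L` steps is encoded as `f : Fin L → Bool`,
where `true` is an up-step `(0,1)` and `false` is a right-step `(1,0)`.
`upsIn f k` is the number of up-steps among the first `k` steps. -/
def upsIn {L : ℕ} (f : Fin L → Bool) (k : ℕ) : ℕ :=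
  (Finset.univ.filter (fun i : Fin L => (i : ℕ) < k ∧ f i = true)).card

/-- The number of right-steps among the first `k` steps. -/
def rightsIn {L : ℕ} (f : Fin L → Bool) (k : ℕ) : ℕ :=
  (Finset.univ.filter (fun i : Fin L => (i : ℕ) < k ∧ f i = false)).card

/-- `weakCount p d n` is the number of monotonic lattice paths from `(0,0)` to
`(n, p*n + d)` all of whose lattice points lie weakly below the line `y = p*x + d`. -/
noncomputable def weakCount (p d n : ℕ) : ℕ :=
  Nat.card {f : Fin ((p + 1) * n + d) → Bool //
    upsIn f ((p + 1) * n + d) = p * n + d ∧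
    ∀ k ≤ (p + 1) * n + d, upsIn f k ≤ p * rightsIn f k + d}

/-- `strictCount p d n` is the number of monotonic lattice paths from `(0,0)` to
`(n, p*n + d)` all of whose lattice points, except the endpoints, lie strictly below
the line `y = p*x + d` (with the convention `strictCount p 0 0 = 0`). -/
noncomputable def strictCount (p d n : ℕ) : ℕ :=
  if n = 0 ∧ d = 0 then 0 else
  Nat.card {f : Fin ((p + 1) * n + d) → Bool //
    upsIn f ((p + 1) * n + d) = p * n + d ∧
    ∀ k, 0 < k → k < (p + 1) * n + d → upsIn f k < p * rightsIn f k + d}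

/-- `crossProb β p d` is the probability `Φ_β(p,d)` that the `β`-biased monotonic random
walk starting at the origin (moving right with probability `1/(β+1)` and up with
probability `β/(β+1)`) crosses the line `y = p*x + d`, i.e. meets a lattice point
`(n, p*n + d + 1)`.  Decomposing by the first lattice point above the line, this
probability equals `∑ₙ S(n,d) β^{pn+d+1}/(β+1)^{pn+n+d+1}`, where `S(n,d) = weakCount p d n`. -/
noncomputable def crossProb (β : ℝ) (p d : ℕ) : ℝ :=
  ∑' n : ℕ, (weakCount p d n : ℝ) * β ^ (p * n + d + 1) / (β + 1) ^ ((p + 1) * n + d + 1)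

/-- `meetProb β p d` is the probability `Ψ_β(p,d)` that the `β`-biased monotonic random
walk starting at the origin meets a lattice point on the line `y = p*x + d` after
departure.  For `d > 0`, decomposing by the first such lattice point `(n, p*n+d)` (reached
by a path strictly below the line except at its endpoint), this probability equals
`∑ₙ T(n,d) β^{pn+d}/(β+1)^{pn+n+d}`; for `d = 0`, by the reflection symmetry of first
meeting points it equals `2 ∑ₙ N(p,n) β^{pn}/(β+1)^{pn+n}`. -/
noncomputable def meetProb (β : ℝ) (p d : ℕ) : ℝ :=
  if d = 0 then 2 * ∑' n : ℕ, (strictCount p 0 n : ℝ) * β ^ (p * n) / (β + 1) ^ ((p + 1) * n)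
  else ∑' n : ℕ, (strictCount p d n : ℝ) * β ^ (p * n + d) / (β + 1) ^ ((p + 1) * n + d)


namespace MeetAux

/-- number of `true`s among the first `k` entries -/
def uk (l : List Bool) (k : ℕ) : ℕ := (l.take k).count true
/-- number of `false`s among the first `k` entries -/
def rk (l : List Bool) (k : ℕ) : ℕ := (l.take k).count false

lemma uk_add_rk (l : List Bool) (k : ℕ) : uk l k + rk l k = min k l.length := by
  rw [uk, rk, List.count_true_add_count_false, List.length_take]

lemma uk_zero (l : List Bool) : uk l 0 = 0 := rfl
lemma rk_zero (l : List Bool) : rk l 0 = 0 := rfl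

lemma uk_length (l : List Bool) {k : ℕ} (h : l.length ≤ k) : uk l k = l.count true := by
  rw [uk, List.take_of_length_le h]
lemma rk_length (l : List Bool) {k : ℕ} (h : l.length ≤ k) : rk l k = l.count false := by
  rw [rk, List.take_of_length_le h]

lemma uk_append (g h : List Bool) (k : ℕ) : uk (g ++ h) k = uk g k + uk h (k - g.length) := by
  rw [uk, List.take_append, List.count_append]; rfl
lemma rk_append (g h : List Bool) (k : ℕ) : rk (g ++ h) k = rk g k + rk h (k - g.length) := by
  rw [rk, List.take_append, List.count_append]; rfl

lemma uk_take (l : List Bool) (j k : ℕ) : uk (l.take j) k = uk l (min k j) := by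
  rw [uk, uk, List.take_take]
lemma rk_take (l : List Bool) (j k : ℕ) : rk (l.take j) k = rk l (min k j) := by
  rw [rk, rk, List.take_take]

lemma uk_succ (l : List Bool) (k : ℕ) (h : k < l.length) :
    uk l (k+1) = uk l k + (if l[k] = true then 1 else 0) := by
  rw [uk, uk, List.take_succ, List.getElem?_eq_getElem h, List.count_append]
  cases hb : l[k] <;> simp [hb, List.count_singleton]

lemma rk_succ (l : List Bool) (k : ℕ) (h : k < l.length) :
    rk l (k+1) = rk l k + (if l[k] = false then 1 else 0) := by
  rw [rk, rk, List.take_succ, List.getElem?_eq_getElem h, List.count_append]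
  cases hb : l[k] <;> simp [hb, List.count_singleton]

lemma count_false_eq (l : List Bool) : l.count false = l.length - l.count true := by
  have := List.count_true_add_count_false l; omega


lemma cardFilter_ofFn {L : ℕ} (f : Fin L → Bool) (b : Bool) (k : ℕ) :
    (Finset.univ.filter (fun i : Fin L => (i : ℕ) < k ∧ f i = b)).card
      = ((List.ofFn f).take k).count b := by
  induction k with
  | zero => simp
  | succ k ih =>
    by_cases h : k < L
    · have hlen : k < (List.ofFn f).length := by simpa using h
      rw [List.take_succ, List.getElem?_eq_getElem hlen, Option.toList_some,
        List.count_append]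
      rw [Finset.card_filter] at ih ⊢
      have step : ∀ i : Fin L,
          (if (i : ℕ) < k + 1 ∧ f i = b then 1 else 0)
            = (if (i : ℕ) < k ∧ f i = b then (1:ℕ) else 0)
              + (if i = ⟨k, h⟩ ∧ f i = b then 1 else 0) := by
        intro i
        rcases lt_trichotomy (i : ℕ) k with hik | hik | hik
        · have : i ≠ ⟨k, h⟩ := by intro e; rw [e] at hik; simp at hik
          by_cases hf : f i = b <;> simp [hik, hf, this, Nat.lt_succ_of_lt, hik.le]
        · have : i = ⟨k, h⟩ := by ext; exact hik
          by_cases hf : f i = b <;> simp [this ▸ hik, hf, this, hik]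
        · have h1 : ¬ ((i : ℕ) < k + 1) := by omega
          have h2 : ¬ ((i : ℕ) < k) := by omega
          have : i ≠ ⟨k, h⟩ := by intro e; rw [e] at hik; simp at hik
          simp [h1, h2, this]
      rw [Finset.sum_congr rfl (fun i _ => step i), Finset.sum_add_distrib, ih]
      congr 1
      have : ∀ i : Fin L, (if i = ⟨k, h⟩ ∧ f i = b then (1:ℕ) else 0)
          = if i = ⟨k, h⟩ then (if f ⟨k, h⟩ = b then 1 else 0) else 0 := by
        intro i; by_cases hi : i = ⟨k, h⟩ <;> simp [hi]
      rw [Finset.sum_congr rfl (fun i _ => this i), Finset.sum_ite_eq' Finset.univ]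
      rw [List.getElem_ofFn]
      cases hb : f ⟨k, h⟩ <;> cases b <;> simp [hb]
    · have hlen : (List.ofFn f).length ≤ k := by simpa using not_lt.mp h
      rw [List.take_of_length_le (by omega : (List.ofFn f).length ≤ k + 1),
        ← List.take_of_length_le hlen, ← ih]
      congr 1
      apply Finset.filter_congr
      intro i _
      have : (i : ℕ) < L := i.2
      constructor
      · rintro ⟨-, h2⟩; exact ⟨by omega, h2⟩
      · rintro ⟨-, h2⟩; exact ⟨by omega, h2⟩
  done

lemma upsIn_ofFn {L : ℕ} (f : Fin L → Bool) (k : ℕ) : upsIn f k = uk (List.ofFn f) k :=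
  cardFilter_ofFn f true k
lemma rightsIn_ofFn {L : ℕ} (f : Fin L → Bool) (k : ℕ) : rightsIn f k = rk (List.ofFn f) k :=
  cardFilter_ofFn f false k


/-- weak paths as lists -/
def Wl (p d n : ℕ) : Type :=
  {l : List Bool // l.length = (p+1)*n + d ∧
    (l.count true = p*n + d ∧ ∀ k, uk l k ≤ p * rk l k + d)}

/-- strict paths as lists -/
def Sl (p n : ℕ) : Type :=
  {l : List Bool // l.length = (p+1)*n ∧
    (l.count true = p*n ∧ ∀ k, 0 < k → k < (p+1)*n → uk l k < p * rk l k)}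

def listEquiv {L : ℕ} (P : List Bool → Prop) :
    {f : Fin L → Bool // P (List.ofFn f)} ≃ {l : List Bool // l.length = L ∧ P l} where
  toFun f := ⟨List.ofFn f.1, List.length_ofFn (f := f.1), f.2⟩
  invFun l := ⟨fun i => l.1.get (Fin.cast l.2.1.symm i), by
    obtain ⟨l, hl, hP⟩ := l
    subst hl
    simpa [List.ofFn_get] using hP⟩
  left_inv f := by
    ext i
    simp
  right_inv l := by
    obtain ⟨l, hl, hP⟩ := l
    subst hl
    simp [List.ofFn_get]

instance (p d n : ℕ) : Finite (Wl p d n) := Finite.of_equiv _ (listEquiv _)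
instance (p n : ℕ) : Finite (Sl p n) := Finite.of_equiv _ (listEquiv _)

lemma weakCount_eq (p d n : ℕ) : weakCount p d n = Nat.card (Wl p d n) := by
  apply Nat.card_congr
  refine Equiv.trans (Equiv.subtypeEquivRight ?_) (listEquiv _)
  intro f
  set l := List.ofFn f with hl
  have hlen : l.length = (p+1)*n + d := by simp [hl]
  constructor
  · rintro ⟨h1, h2⟩
    have hct : l.count true = p*n + d := by
      rw [← uk_length l (le_of_eq hlen), ← upsIn_ofFn]; exact h1
    refine ⟨hct, fun k => ?_⟩
    by_cases hk : k ≤ (p+1)*n + d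
    · rw [← upsIn_ofFn, ← rightsIn_ofFn]; exact h2 k hk
    · have hLk : l.length ≤ k := by omega
      rw [uk_length l hLk, rk_length l hLk, hct, count_false_eq, hlen, hct]
      have : (p+1)*n + d - (p*n + d) = n := by ring_nf; omega
      rw [this]
    
  · rintro ⟨h1, h2⟩
    constructor
    · rw [upsIn_ofFn, ← hl, uk_length l (le_of_eq hlen)]; exact h1
    · intro k _
      rw [upsIn_ofFn, rightsIn_ofFn, ← hl]; exact h2 k

lemma strictCount_eq (p n : ℕ) : strictCount p 0 (n+1) = Nat.card (Sl p (n+1)) := by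
  rw [strictCount, if_neg (by simp)]
  apply Nat.card_congr
  refine Equiv.trans (Equiv.subtypeEquivRight ?_) (listEquiv _)
  intro f
  set l := List.ofFn f with hl
  have hlen : l.length = (p+1)*(n+1) + 0 := by simp [hl]; ring
  constructor
  · rintro ⟨h1, h2⟩
    constructor
    · rw [← uk_length l (le_of_eq hlen), ← upsIn_ofFn]; simpa using h1
    · intro k hk hk2
      have := h2 k hk (by omega)
      rw [upsIn_ofFn, rightsIn_ofFn, ← hl] at this; omega
  · rintro ⟨h1, h2⟩
    constructor
    · rw [upsIn_ofFn, ← hl, uk_length l (le_of_eq hlen)]; simpa using h1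
    · intro k hk hk2
      have := h2 k hk (by omega)
      rw [upsIn_ofFn, rightsIn_ofFn, ← hl]; omega

lemma strictCount_zero (p : ℕ) : strictCount p 0 0 = 0 := by
  rw [strictCount, if_pos ⟨rfl, rfl⟩]

lemma uk_cons (b : Bool) (h : List Bool) (k : ℕ) :
    uk (b :: h) (k+1) = (if b = true then 1 else 0) + uk h k := by
  rw [uk, uk, List.take_succ_cons, List.count_cons]
  cases b <;> simp <;> omega

lemma rk_cons (b : Bool) (h : List Bool) (k : ℕ) :
    rk (b :: h) (k+1) = (if b = false then 1 else 0) + rk h k := by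
  rw [rk, rk, List.take_succ_cons, List.count_cons]
  cases b <;> simp <;> omega

lemma uk_mono (l : List Bool) {j k : ℕ} (h : j ≤ k) : uk l j ≤ uk l k := by
  rw [uk, uk, ← min_eq_left h, ← List.take_take]
  exact ((l.take k).take_sublist j).count_le true

lemma rk_mono (l : List Bool) {j k : ℕ} (h : j ≤ k) : rk l j ≤ rk l k := by
  rw [rk, rk, ← min_eq_left h, ← List.take_take]
  exact ((l.take k).take_sublist j).count_le false

lemma uk_le_count (l : List Bool) (k : ℕ) : uk l k ≤ l.count true :=
  (l.take_sublist k).count_le true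
lemma rk_le_count (l : List Bool) (k : ℕ) : rk l k ≤ l.count false :=
  (l.take_sublist k).count_le false


/-! ### The first-step decomposition: `W p 0 (n+1)` vs `W p p n` -/

lemma card_C3 (p n : ℕ) (hp : 0 < p) : Nat.card (Wl p 0 (n+1)) = Nat.card (Wl p p n) := by
  have e1 : (p+1)*(n+1) = (p+1)*n + p + 1 := by ring
  have e2 : p*(n+1) = p*n + p := by ring
  symm
  apply Nat.card_eq_of_bijective (fun h => (⟨false :: h.1, ?_, ?_, ?_⟩ : Wl p 0 (n+1)))
  rotate_left
  · obtain ⟨h, hlen, hct, hwk⟩ := h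
    simp only [List.length_cons, hlen]; omega
  · obtain ⟨h, hlen, hct, hwk⟩ := h
    simp only [List.count_cons, hct]; simp; omega
  · obtain ⟨h, hlen, hct, hwk⟩ := h
    intro k
    match k with
    | 0 => simp [uk_zero, rk_zero]
    | (k+1) =>
      rw [uk_cons, rk_cons]
      have := hwk k
      norm_num
      have e3 : p * (1 + rk h k) = p + p * rk h k := by ring
      omega
  constructor
  · intro h h' e
    have : false :: h.1 = false :: h'.1 := congrArg Subtype.val e
    exact Subtype.ext (by injection this)
  · rintro ⟨l, hlen, hct, hwk⟩
    have hL : 0 < l.length := by rw [hlen]; positivity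
    have h0 : l[0] = false := by
      by_contra hb
      have hb' : l[0] = true := by revert hb; cases l[0] <;> simp
      have h1 := hwk 1
      have hcons := List.drop_eq_getElem_cons (i := 0) hL
      rw [List.drop_zero, hb'] at hcons
      have hu : uk l 1 = 1 := by
        conv_lhs => rw [hcons]
        rw [uk_cons]; simp [uk_zero]
      have hr : rk l 1 = 0 := by
        conv_lhs => rw [hcons]
        rw [rk_cons]; simp [rk_zero]
      rw [hu, hr] at h1; simp at h1
    have hdecomp : l = false :: l.tail := by
      rw [← List.drop_one]
      conv_lhs => rw [← List.drop_zero (l := l), List.drop_eq_getElem_cons hL, h0]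
    refine ⟨⟨l.tail, ?_, ?_, ?_⟩, ?_⟩
    · rw [List.length_tail, hlen]; omega
    · have h2 : List.count true (false :: l.tail) = p*(n+1) + 0 := by rw [← hdecomp]; exact hct
      rw [List.count_cons] at h2
      simp at h2
      omega
    · intro k
      have h3 := hwk (k+1)
      rw [hdecomp, uk_cons, rk_cons] at h3
      norm_num at h3
      have e3 : p * (1 + rk l.tail k) = p + p * rk l.tail k := by ring
      omega
    · exact Subtype.ext hdecomp.symm

lemma count_false_of {p d n : ℕ} {l : List Bool} (hlen : l.length = (p+1)*n + d)
    (hct : l.count true = p*n + d) : l.count false = n := by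
  have h1 := List.count_true_add_count_false l
  have e1 : (p+1)*n = p*n + n := by ring
  omega

lemma uk_drop (l : List Bool) {K : ℕ} (hK : K ≤ l.length) (k : ℕ) :
    uk l (K + k) = uk l K + uk (l.drop K) k := by
  conv_lhs => rw [← List.take_append_drop K l]
  rw [uk_append, List.length_take, min_eq_left hK, uk_take,
    min_eq_right (Nat.le_add_right _ _)]
  have e : K + k - K = k := by omega
  rw [e]

lemma rk_drop (l : List Bool) {K : ℕ} (hK : K ≤ l.length) (k : ℕ) :
    rk l (K + k) = rk l K + rk (l.drop K) k := by
  conv_lhs => rw [← List.take_append_drop K l]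
  rw [rk_append, List.length_take, min_eq_left hK, rk_take,
    min_eq_right (Nat.le_add_right _ _)]
  have e : K + k - K = k := by omega
  rw [e]

lemma count_drop_true (l : List Bool) (K : ℕ) :
    uk l K + (l.drop K).count true = l.count true := by
  conv_rhs => rw [← List.take_append_drop K l]
  rw [List.count_append]; rfl

/-- uniqueness of a minimal witness -/
lemma minimal_unique {P : ℕ → Prop} {a b : ℕ} (ha1 : P a) (ha2 : ∀ k < a, ¬ P k)
    (hb1 : P b) (hb2 : ∀ k < b, ¬ P k) : a = b := by
  rcases lt_trichotomy a b with h | h | h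
  · exact absurd ha1 (hb2 a h)
  · exact h
  · exact absurd hb1 (ha2 b h)

/-- first-crossing structure of `g ++ true :: t` for `g` a weak path ending on the line -/
lemma conc_cross {p m : ℕ} {g t : List Bool} (hgl : g.length = (p+1)*m + 0)
    (hgct : g.count true = p*m + 0) (hgwk : ∀ k, uk g k ≤ p * rk g k + 0) :
    (p * rk (g ++ true :: t) ((p+1)*m + 1) < uk (g ++ true :: t) ((p+1)*m + 1)) ∧
    ∀ k < (p+1)*m + 1, ¬ (p * rk (g ++ true :: t) k < uk (g ++ true :: t) k) := by
  have hgcf : g.count false = m := count_false_of hgl hgct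
  constructor
  · rw [uk_append, rk_append, hgl]
    have e1 : (p+1)*m + 1 - ((p+1)*m + 0) = 1 := by omega
    rw [e1, uk_cons, rk_cons, uk_zero, rk_zero,
      uk_length g (by omega), rk_length g (by omega), hgct, hgcf]
    norm_num
  · intro k hk
    rw [uk_append, rk_append, hgl]
    have e1 : k - ((p+1)*m + 0) = 0 := by omega
    rw [e1, uk_zero, rk_zero]
    have := hgwk k
    simp only [Nat.add_zero]
    omega

lemma natCard_sigma {N : ℕ} (X : Fin N → Type*) [∀ m, Finite (X m)] :
    Nat.card (Σ m, X m) = ∑ m : Fin N, Nat.card (X m) := by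
  letI : ∀ m, Fintype (X m) := fun m => Fintype.ofFinite (X m)
  simp [Nat.card_eq_fintype_card]

lemma card_C2_sigma (p d n : ℕ) :
    Nat.card (Wl p (d+1) n)
      = Nat.card (Σ m : Fin (n+1), Wl p 0 m.1 × Wl p d (n - m.1)) := by
  symm
  have lenfact : ∀ (m : ℕ), m ≤ n → ∀ (g : Wl p 0 m) (h : Wl p d (n - m)),
      (g.1 ++ true :: h.1).length = (p+1)*n + (d+1) := by
    intro m hm g h
    obtain ⟨g, hgl, -, -⟩ := g
    obtain ⟨h, hhl, -, -⟩ := h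
    have e1 : (p+1)*(m + (n - m)) = (p+1)*m + (p+1)*(n-m) := by ring
    have e2 : m + (n - m) = n := by omega
    simp only [List.length_append, List.length_cons, hgl, hhl]
    rw [e2] at e1
    omega
  apply Nat.card_eq_of_bijective
    (f := fun x : (Σ m : Fin (n+1), Wl p 0 m.1 × Wl p d (n - m.1)) =>
      (⟨x.2.1.1 ++ true :: x.2.2.1, by
        exact lenfact x.1.1 (by omega) x.2.1 x.2.2, ?_, ?_⟩ : Wl p (d+1) n))
  rotate_left
  · -- count true
    obtain ⟨⟨m, hm⟩, ⟨g, hgl, hgct, hgwk⟩, ⟨h, hhl, hhct, hhwk⟩⟩ := x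
    have hmval : (⟨m, hm⟩ : Fin (n+1)).val = m := rfl
    simp only [hmval] at hgl hgct hhl hhct ⊢
    have e1 : p*(m + (n - m)) = p*m + p*(n-m) := by ring
    have e2 : m + (n - m) = n := by omega
    rw [e2] at e1
    simp only [List.count_append, List.count_cons, hgct, hhct]
    simp
    omega
  · -- weak
    obtain ⟨⟨m, hm⟩, ⟨g, hgl, hgct, hgwk⟩, ⟨h, hhl, hhct, hhwk⟩⟩ := x
    have hmval : (⟨m, hm⟩ : Fin (n+1)).val = m := rfl
    simp only [hmval] at hgl hgct hhl hhct ⊢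
    intro k
    rw [uk_append, rk_append]
    rcases Nat.lt_or_ge k (g.length + 1) with hk | hk
    · have e0 : k - g.length = 0 := by omega
      rw [e0, uk_zero, rk_zero]
      have := hgwk k
      simp only [Nat.add_zero]
      omega
    · obtain ⟨j, hj⟩ : ∃ j, k - g.length = j + 1 := ⟨k - g.length - 1, by omega⟩
      rw [hj, uk_cons, rk_cons]
      have h7 := hhwk j
      have h8 : uk g k = p*m + 0 := by rw [uk_length g (by omega), hgct]
      have h9 : rk g k = m := by
        rw [rk_length g (by omega)]
        exact count_false_of hgl hgct
      rw [h8, h9]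
      have e7 : p * (m + (0 + rk h j)) = p * m + p * rk h j := by ring
      norm_num at e7 ⊢
      omega
  constructor
  · -- injective
    rintro ⟨⟨m, hm⟩, ⟨g, hgl, hgct, hgwk⟩, ⟨h, hhl, hhct, hhwk⟩⟩
      ⟨⟨m', hm'⟩, ⟨g', hgl', hgct', hgwk'⟩, ⟨h', hhl', hhct', hhwk'⟩⟩ e
    have hval : g ++ true :: h = g' ++ true :: h' := congrArg Subtype.val e
    have hmv : (⟨m, hm⟩ : Fin (n+1)).val = m := rfl
    have hmv' : (⟨m', hm'⟩ : Fin (n+1)).val = m' := rfl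
    rw [hmv] at hgl hgct
    rw [hmv'] at hgl' hgct'
    have c1 := conc_cross (t := h) hgl hgct hgwk
    have c2 := conc_cross (t := h') hgl' hgct' hgwk'
    rw [hval] at c1
    have hmm : (p+1)*m + 1 = (p+1)*m' + 1 :=
      minimal_unique (P := fun k => p * rk (g' ++ true :: h') k < uk (g' ++ true :: h') k)
        c1.1 c1.2 c2.1 c2.2
    have hmm' : m = m' := by
      have : (p+1)*m = (p+1)*m' := by omega
      exact Nat.eq_of_mul_eq_mul_left (by omega) this
    subst hmm'
    have hlen : g.length = g'.length := by rw [hgl, hgl']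
    obtain ⟨hg, hth⟩ := List.append_inj hval hlen
    have hh : h = h' := by injection hth
    subst hg; subst hh
    rfl
  · -- surjective
    rintro ⟨l, hlen, hct, hwk⟩
    have hcf : l.count false = n := count_false_of hlen hct
    have hex : ∃ k, p * rk l k < uk l k := by
      refine ⟨l.length, ?_⟩
      rw [uk_length l le_rfl, rk_length l le_rfl, hct, hcf]
      omega
    set K := Nat.find hex with hKdef
    have hspec : p * rk l K < uk l K := Nat.find_spec hex
    have hmin : ∀ j, j < K → ¬ (p * rk l j < uk l j) := fun j hj => Nat.find_min hex hj
    have hK0 : 0 < K := by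
      rcases Nat.eq_zero_or_pos K with h0 | h0
      · rw [h0] at hspec; simp [uk_zero, rk_zero] at hspec
      · exact h0
    have hKle : K ≤ l.length := Nat.find_le (by
      rw [uk_length l le_rfl, rk_length l le_rfl, hct, hcf]; omega)
    have hjlt : K - 1 < l.length := by omega
    have hstep_u := uk_succ l (K-1) hjlt
    have hstep_r := rk_succ l (K-1) hjlt
    rw [(by omega : K - 1 + 1 = K)] at hstep_u hstep_r
    have hjmin := hmin (K-1) (by omega)
    push_neg at hjmin
    have hbj : l[K-1] = true := by
      by_contra hb
      have hbf : l[K-1] = false := by revert hb; cases l[K-1] <;> simp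
      rw [hbf] at hstep_u hstep_r
      simp at hstep_u hstep_r
      rw [hstep_u, hstep_r] at hspec
      have : p * (rk l (K-1) + 1) = p * rk l (K-1) + p := by ring
      omega
    rw [hbj] at hstep_u hstep_r
    simp at hstep_u hstep_r
    rw [hstep_u, hstep_r] at hspec
    have heq : uk l (K-1) = p * rk l (K-1) := by omega
    have hmn : rk l (K-1) ≤ n := hcf ▸ rk_le_count l (K-1)
    set m := rk l (K-1) with hmdef
    have hjlen : K - 1 = (p+1)*m := by
      have h1 := uk_add_rk l (K-1)
      rw [min_eq_left (by omega), heq] at h1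
      have e6 : (p+1)*m = p*m + m := by ring
      omega
    have hukK : uk l K = p*m + 1 := by omega
    have hrkK : rk l K = m := by omega
    have hdecomp : l = l.take (K-1) ++ true :: l.drop K := by
      conv_lhs => rw [← List.take_append_drop (K-1) l]
      congr 1
      rw [List.drop_eq_getElem_cons hjlt, hbj, (by omega : K - 1 + 1 = K)]
    have e1 : (p+1)*(n-m) = (p+1)*n - (p+1)*m := Nat.mul_sub _ _ _
    have e2 : p*(n-m) = p*n - p*m := Nat.mul_sub _ _ _
    have e3 : (p+1)*m ≤ (p+1)*n := Nat.mul_le_mul_left _ hmn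
    have e4 : p*m ≤ p*n := Nat.mul_le_mul_left _ hmn
    have hcd := count_drop_true l K
    refine ⟨⟨⟨m, by omega⟩, ⟨l.take (K-1), ?_, ?_, ?_⟩, ⟨l.drop K, ?_, ?_, ?_⟩⟩, ?_⟩
    · show (l.take (K-1)).length = (p+1)*m + 0
      rw [List.length_take]; omega
    · show uk l (K-1) = p*m + 0
      omega
    · show ∀ k, uk (l.take (K-1)) k ≤ p * rk (l.take (K-1)) k + 0
      intro k
      rw [uk_take, rk_take]
      have := hmin (min k (K-1)) (by omega)
      omega
    · show (l.drop K).length = (p+1)*(n-m) + d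
      rw [List.length_drop]; omega
    · show (l.drop K).count true = p*(n-m) + d
      omega
    · show ∀ k, uk (l.drop K) k ≤ p * rk (l.drop K) k + d
      intro k
      have h5 := hwk (K + k)
      rw [uk_drop l hKle, rk_drop l hKle, hukK, hrkK] at h5
      have e7 : p * (m + rk (l.drop K) k) = p*m + p * rk (l.drop K) k := by ring
      omega
    · exact Subtype.ext hdecomp.symm

lemma card_C2 (p d n : ℕ) :
    Nat.card (Wl p (d+1) n)
      = ∑ m ∈ Finset.range (n+1), Nat.card (Wl p 0 m) * Nat.card (Wl p d (n - m)) := by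
  rw [card_C2_sigma, natCard_sigma]
  rw [Finset.sum_range fun m => Nat.card (Wl p 0 m) * Nat.card (Wl p d (n - m))]
  exact Finset.sum_congr rfl fun m _ => Nat.card_prod _ _


/-- first-return structure of `s ++ t` for `s` a strict path -/
lemma conc_return {p m1 : ℕ} {s t : List Bool} (hsl : s.length = (p+1)*m1)
    (hsct : s.count true = p*m1)
    (hss : ∀ k, 0 < k → k < (p+1)*m1 → uk s k < p * rk s k) :
    ((0 < (p+1)*m1 ∧ uk (s ++ t) ((p+1)*m1) = p * rk (s ++ t) ((p+1)*m1)) →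
        True) ∧
    (0 < m1 → (0 < (p+1)*m1 ∧ uk (s ++ t) ((p+1)*m1) = p * rk (s ++ t) ((p+1)*m1)) ∧
      ∀ k < (p+1)*m1, ¬ (0 < k ∧ uk (s ++ t) k = p * rk (s ++ t) k)) := by
  have hscf : s.count false = m1 := count_false_of (by omega : s.length = (p+1)*m1 + 0)
    (by omega : s.count true = p*m1 + 0)
  refine ⟨fun _ => trivial, fun hm1 => ⟨⟨by positivity, ?_⟩, ?_⟩⟩
  · rw [uk_append, rk_append, hsl, Nat.sub_self, uk_zero, rk_zero,
      uk_length s (le_of_eq hsl), rk_length s (le_of_eq hsl), hsct, hscf]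
    simp
  · intro k hk
    rintro ⟨hk0, hkeq⟩
    rw [uk_append, rk_append, hsl, (by omega : k - (p+1)*m1 = 0), uk_zero, rk_zero] at hkeq
    simp only [Nat.add_zero] at hkeq
    have := hss k hk0 hk
    omega

lemma card_C1_sigma (p n : ℕ) :
    Nat.card (Wl p 0 (n+1))
      = Nat.card (Σ m : Fin (n+1), Sl p (m.1+1) × Wl p 0 (n - m.1)) := by
  symm
  apply Nat.card_eq_of_bijective
    (f := fun x : (Σ m : Fin (n+1), Sl p (m.1+1) × Wl p 0 (n - m.1)) =>
      (⟨x.2.1.1 ++ x.2.2.1, ?_, ?_, ?_⟩ : Wl p 0 (n+1)))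
  rotate_left
  · -- length
    obtain ⟨⟨m, hm⟩, ⟨s, hsl, hsct, hss⟩, ⟨w, hwl, hwct, hww⟩⟩ := x
    have hmval : (⟨m, hm⟩ : Fin (n+1)).val = m := rfl
    rw [hmval] at hsl hwl
    have e1 : (p+1)*((m+1) + (n - m)) = (p+1)*(m+1) + (p+1)*(n-m) := by ring
    have e2 : (m+1) + (n - m) = n+1 := by omega
    rw [e2] at e1
    simp only [List.length_append, hsl, hwl]
    omega
  · -- count true
    obtain ⟨⟨m, hm⟩, ⟨s, hsl, hsct, hss⟩, ⟨w, hwl, hwct, hww⟩⟩ := x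
    have hmval : (⟨m, hm⟩ : Fin (n+1)).val = m := rfl
    rw [hmval] at hsct hwct
    have e1 : p*((m+1) + (n - m)) = p*(m+1) + p*(n-m) := by ring
    have e2 : (m+1) + (n - m) = n+1 := by omega
    rw [e2] at e1
    simp only [List.count_append, hsct, hwct]
    omega
  · -- weak
    obtain ⟨⟨m, hm⟩, ⟨s, hsl, hsct, hss⟩, ⟨w, hwl, hwct, hww⟩⟩ := x
    have hmval : (⟨m, hm⟩ : Fin (n+1)).val = m := rfl
    rw [hmval] at hsl hsct hwl hwct
    have hscf : s.count false = m+1 := count_false_of (by omega : s.length = (p+1)*(m+1) + 0)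
      (by omega : s.count true = p*(m+1) + 0)
    intro k
    dsimp only
    rw [uk_append, rk_append, hsl]
    rcases Nat.lt_or_ge k ((p+1)*(m+1)) with hk | hk
    · rw [(by omega : k - (p+1)*(m+1) = 0), uk_zero, rk_zero]
      simp only [Nat.add_zero]
      rcases Nat.eq_zero_or_pos k with hk0 | hk0
      · subst hk0; simp [uk_zero, rk_zero]
      · have := hss k hk0 hk
        omega
    · have h8 : uk s k = p*(m+1) := by rw [uk_length s (by omega), hsct]
      have h9 : rk s k = m+1 := by rw [rk_length s (by omega), hscf]
      have h7 := hww (k - (p+1)*(m+1))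
      rw [h8, h9]
      have e7 : p * ((m+1) + rk w (k - (p+1)*(m+1)))
          = p*(m+1) + p * rk w (k - (p+1)*(m+1)) := by ring
      omega
  constructor
  · -- injective
    rintro ⟨⟨m, hm⟩, ⟨s, hsl, hsct, hss⟩, ⟨w, hwl, hwct, hww⟩⟩
      ⟨⟨m', hm'⟩, ⟨s', hsl', hsct', hss'⟩, ⟨w', hwl', hwct', hww'⟩⟩ e
    have hval : s ++ w = s' ++ w' := congrArg Subtype.val e
    have hmv : (⟨m, hm⟩ : Fin (n+1)).val = m := rfl
    have hmv' : (⟨m', hm'⟩ : Fin (n+1)).val = m' := rfl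
    rw [hmv] at hsl hsct hss
    rw [hmv'] at hsl' hsct' hss'
    have c1 := (conc_return (t := w) hsl hsct hss).2 (by omega)
    have c2 := (conc_return (t := w') hsl' hsct' hss').2 (by omega)
    rw [hval] at c1
    have hmm : (p+1)*(m+1) = (p+1)*(m'+1) :=
      minimal_unique
        (P := fun k => 0 < k ∧ uk (s' ++ w') k = p * rk (s' ++ w') k)
        c1.1 c1.2 c2.1 c2.2
    have hmm' : m = m' := by
      have := Nat.eq_of_mul_eq_mul_left (show 0 < p+1 by omega) hmm
      omega
    subst hmm'
    have hlen : s.length = s'.length := by rw [hsl, hsl']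
    obtain ⟨hg, hth⟩ := List.append_inj hval hlen
    subst hg; subst hth
    rfl
  · -- surjective
    rintro ⟨l, hlen, hct, hwk⟩
    have hcf : l.count false = n+1 := count_false_of hlen hct
    have hLpos : 0 < l.length := by
      rw [hlen]; have : 0 < (p+1)*(n+1) := by positivity
      omega
    have hex : ∃ k, 0 < k ∧ uk l k = p * rk l k := by
      refine ⟨l.length, hLpos, ?_⟩
      rw [uk_length l le_rfl, rk_length l le_rfl, hct, hcf]
      omega
    set K := Nat.find hex with hKdef
    obtain ⟨hK0, hKeq⟩ : 0 < K ∧ uk l K = p * rk l K := Nat.find_spec hex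
    have hmin : ∀ j, j < K → ¬ (0 < j ∧ uk l j = p * rk l j) :=
      fun j hj => Nat.find_min hex hj
    have hKle : K ≤ l.length := Nat.find_le ⟨hLpos, by
      rw [uk_length l le_rfl, rk_length l le_rfl, hct, hcf]; omega⟩
    set m1 := rk l K with hm1def
    have hKeq' : uk l K = p * m1 := hKeq
    have hm1pos : 0 < m1 := by
      by_contra h0
      push_neg at h0
      have hm0 : m1 = 0 := by omega
      have hu0 : uk l K = 0 := by rw [hKeq', hm0, Nat.mul_zero]
      have h1 := uk_add_rk l K
      rw [min_eq_left hKle] at h1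
      omega
    have hKlen : K = (p+1)*m1 := by
      have h1 := uk_add_rk l K
      rw [min_eq_left hKle] at h1
      have e6 : (p+1)*m1 = p*m1 + m1 := by ring
      omega
    have hm1n : m1 ≤ n+1 := hcf ▸ rk_le_count l K
    have e1 : (p+1)*(n+1-m1) = (p+1)*(n+1) - (p+1)*m1 := Nat.mul_sub _ _ _
    have e2 : p*(n+1-m1) = p*(n+1) - p*m1 := Nat.mul_sub _ _ _
    have e3 : (p+1)*m1 ≤ (p+1)*(n+1) := Nat.mul_le_mul_left _ hm1n
    have e4 : p*m1 ≤ p*(n+1) := Nat.mul_le_mul_left _ hm1n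
    have hcd := count_drop_true l K
    refine ⟨⟨⟨m1 - 1, by omega⟩, ⟨l.take K, ?_, ?_, ?_⟩, ⟨l.drop K, ?_, ?_, ?_⟩⟩, ?_⟩
    · show (l.take K).length = (p+1)*(m1 - 1 + 1)
      rw [List.length_take, (by omega : m1 - 1 + 1 = m1)]
      omega
    · show uk l K = p*(m1 - 1 + 1)
      rw [(by omega : m1 - 1 + 1 = m1)]
      omega
    · show ∀ k, 0 < k → k < (p+1)*(m1 - 1 + 1) → uk (l.take K) k < p * rk (l.take K) k
      rw [(by omega : m1 - 1 + 1 = m1)]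
      intro k hk0 hkK
      rw [uk_take, rk_take, min_eq_left (by omega)]
      have hne := hmin k (by omega)
      have hle := hwk k
      simp only [Nat.add_zero] at hle
      omega
    · show (l.drop K).length = (p+1)*(n - (m1-1)) + 0
      rw [List.length_drop, (by omega : n - (m1-1) = n+1-m1)]
      omega
    · show (l.drop K).count true = p*(n - (m1-1)) + 0
      rw [(by omega : n - (m1-1) = n+1-m1)]
      omega
    · show ∀ k, uk (l.drop K) k ≤ p * rk (l.drop K) k + 0
      intro k
      have h5 := hwk (K + k)
      rw [uk_drop l hKle, rk_drop l hKle, hKeq', ← hm1def] at h5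
      have e7 : p * (m1 + rk (l.drop K) k) = p*m1 + p * rk (l.drop K) k := by ring
      omega
    · exact Subtype.ext (List.take_append_drop K l)

lemma card_C1 (p n : ℕ) :
    Nat.card (Wl p 0 (n+1))
      = ∑ m ∈ Finset.range (n+1), Nat.card (Sl p (m+1)) * Nat.card (Wl p 0 (n - m)) := by
  rw [card_C1_sigma, natCard_sigma]
  rw [Finset.sum_range fun m => Nat.card (Sl p (m+1)) * Nat.card (Wl p 0 (n - m))]
  exact Finset.sum_congr rfl fun m _ => Nat.card_prod _ _


lemma card_W00 (p : ℕ) : Nat.card (Wl p 0 0) = 1 := by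
  have inst : Unique (Wl p 0 0) := {
    default := ⟨[], by simp, by simp, fun k => by simp [uk, rk]⟩
    uniq := fun l => by
      apply Subtype.ext
      have h := l.2.1
      simp at h
      simp [h] }
  exact Nat.card_unique

lemma conv_partial_le {x y : ℕ → ℝ} (hx : ∀ i, 0 ≤ x i) (hy : ∀ i, 0 ≤ y i) (N : ℕ) :
    ∑ n ∈ Finset.range N, ∑ m ∈ Finset.range (n+1), x m * y (n-m)
      ≤ (∑ m ∈ Finset.range N, x m) * (∑ k ∈ Finset.range N, y k) := by
  have h1 : ∑ n ∈ Finset.range N, ∑ m ∈ Finset.range (n+1), x m * y (n-m)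
      = ∑ q ∈ (Finset.range N ×ˢ Finset.range N).filter (fun q => q.1 + q.2 < N),
          x q.1 * y q.2 := by
    rw [Finset.sum_sigma' (Finset.range N) (fun n => Finset.range (n+1))
      (fun n m => x m * y (n - m))]
    apply Finset.sum_nbij' (i := fun q => (q.2, q.1 - q.2)) (j := fun q => ⟨q.1 + q.2, q.1⟩)
    · rintro ⟨n, m⟩ hq
      simp only [Finset.mem_sigma, Finset.mem_range] at hq
      simp only [Finset.mem_filter, Finset.mem_product, Finset.mem_range]
      omega
    · rintro ⟨m, k⟩ hq
      simp only [Finset.mem_filter, Finset.mem_product, Finset.mem_range] at hq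
      simp only [Finset.mem_sigma, Finset.mem_range]
      omega
    · rintro ⟨n, m⟩ hq
      simp only [Finset.mem_sigma, Finset.mem_range] at hq
      dsimp only
      show (⟨m + (n - m), m⟩ : Σ _ : ℕ, ℕ) = ⟨n, m⟩
      rw [show m + (n - m) = n by omega]
    · rintro ⟨m, k⟩ hq
      simp only [Finset.mem_filter, Finset.mem_product, Finset.mem_range] at hq
      dsimp only
      show ((m, m + k - m) : ℕ × ℕ) = (m, k)
      rw [show m + k - m = k by omega]
    · rintro ⟨n, m⟩ hq; rfl
  rw [h1, Finset.sum_mul_sum, ← Finset.sum_product']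
  apply Finset.sum_le_sum_of_subset_of_nonneg (Finset.filter_subset _ _)
  intro i _ _
  exact mul_nonneg (hx _) (hy _)

/-- the `d`-level term sequence -/
noncomputable def uD (β : ℝ) (p d n : ℕ) : ℝ :=
  (Nat.card (Wl p d n) : ℝ) * β^(p*n+d) / (β+1)^((p+1)*n+d)

/-- the strict-path term sequence -/
noncomputable def vS (β : ℝ) (p n : ℕ) : ℝ :=
  (strictCount p 0 n : ℝ) * β^(p*n) / (β+1)^((p+1)*n)

lemma uD_nonneg {β : ℝ} (hβ : 0 < β) (p d n : ℕ) : 0 ≤ uD β p d n := by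
  have h1 : (0:ℝ) < β + 1 := by linarith
  exact div_nonneg (mul_nonneg (Nat.cast_nonneg _) (pow_nonneg hβ.le _)) (pow_nonneg h1.le _)

lemma vS_nonneg {β : ℝ} (hβ : 0 < β) (p n : ℕ) : 0 ≤ vS β p n := by
  have h1 : (0:ℝ) < β + 1 := by linarith
  exact div_nonneg (mul_nonneg (Nat.cast_nonneg _) (pow_nonneg hβ.le _)) (pow_nonneg h1.le _)

lemma uD_zero_zero (β : ℝ) (p : ℕ) : uD β p 0 0 = 1 := by
  rw [uD, card_W00]
  norm_num

lemma vS_zero (β : ℝ) (p : ℕ) : vS β p 0 = 0 := by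
  rw [vS, strictCount_zero]
  norm_num

lemma uD_C2 {β : ℝ} (hβ : 0 < β) (p d n : ℕ) :
    uD β p (d+1) n = ∑ m ∈ Finset.range (n+1), (β/(β+1)) * (uD β p 0 m * uD β p d (n-m)) := by
  have h1 : (β:ℝ) + 1 ≠ 0 := by linarith
  have hb : (β:ℝ) ≠ 0 := ne_of_gt hβ
  rw [uD, card_C2, Nat.cast_sum]
  rw [Finset.sum_mul, Finset.sum_div]
  refine Finset.sum_congr rfl fun m hm => ?_
  have hmn : m ≤ n := by simpa [Nat.lt_succ_iff] using hm
  have e1 : p*(n-m) = p*n - p*m := Nat.mul_sub _ _ _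
  have e2 : (p+1)*(n-m) = (p+1)*n - (p+1)*m := Nat.mul_sub _ _ _
  have e3 : p*m ≤ p*n := Nat.mul_le_mul_left _ hmn
  have e4 : (p+1)*m ≤ (p+1)*n := Nat.mul_le_mul_left _ hmn
  have e5 : (p+1)*n = p*n + n := by ring
  have e6 : (p+1)*m = p*m + m := by ring
  have ep : p*n+(d+1) = (p*m+0) + ((p*(n-m)+d) + 1) := by omega
  have eq' : (p+1)*n+(d+1) = ((p+1)*m+0) + (((p+1)*(n-m)+d) + 1) := by omega
  rw [ep, eq', Nat.cast_mul, uD, uD]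
  field_simp
  ring

lemma uD_C3 {β : ℝ} (hβ : 0 < β) {p : ℕ} (hp : 0 < p) (n : ℕ) :
    uD β p 0 (n+1) = (1/(β+1)) * uD β p p n := by
  have h1 : (β:ℝ) + 1 ≠ 0 := by linarith
  rw [uD, uD, card_C3 p n hp]
  rw [show p*(n+1)+0 = p*n+p by ring, show (p+1)*(n+1)+0 = ((p+1)*n+p)+1 by ring, pow_succ,
    ← div_div, one_div_mul_eq_div]

lemma uD_C1 {β : ℝ} (p n : ℕ) :
    uD β p 0 (n+1) = ∑ m ∈ Finset.range (n+1), vS β p (m+1) * uD β p 0 (n-m) := by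
  rw [uD, card_C1, Nat.cast_sum]
  rw [Finset.sum_mul, Finset.sum_div]
  refine Finset.sum_congr rfl fun m hm => ?_
  have hmn : m ≤ n := by simpa [Nat.lt_succ_iff] using hm
  have e1 : p*(n-m) = p*n - p*m := Nat.mul_sub _ _ _
  have e2 : (p+1)*(n-m) = (p+1)*n - (p+1)*m := Nat.mul_sub _ _ _
  have e3 : p*m ≤ p*n := Nat.mul_le_mul_left _ hmn
  have e4 : (p+1)*m ≤ (p+1)*n := Nat.mul_le_mul_left _ hmn
  have e5 : ∀ a b : ℕ, (p+1)*(a+b) = (p+1)*a + (p+1)*b := fun a b => by ring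
  have e6 : ∀ a b : ℕ, p*(a+b) = p*a + p*b := fun a b => by ring
  have e7 := e5 n 1
  have e8 := e6 n 1
  have e9 := e5 m 1
  have e10 := e6 m 1
  have ep : p*(n+1)+0 = (p*(m+1)) + (p*(n-m)+0) := by omega
  have eq' : (p+1)*(n+1)+0 = ((p+1)*(m+1)) + ((p+1)*(n-m)+0) := by omega
  rw [ep, eq', Nat.cast_mul, vS, uD, strictCount_eq]
  rw [div_mul_div_comm]
  ring

lemma uD_conv {β : ℝ} (p n : ℕ) :
    uD β p 0 n
      = (if n = 0 then (1:ℝ) else 0)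
        + ∑ m ∈ Finset.range (n+1), vS β p m * uD β p 0 (n-m) := by
  match n with
  | 0 => simp [uD_zero_zero, vS_zero]
  | (n+1) =>
    rw [if_neg (by omega), Finset.sum_range_succ' (fun m => vS β p m * uD β p 0 (n+1-m)) (n+1)]
    rw [vS_zero]
    simp only [zero_mul, add_zero, zero_add]
    rw [uD_C1]
    exact Finset.sum_congr rfl fun k _ => by rw [Nat.succ_sub_succ]

lemma sum_range_uD_d_le {β : ℝ} (hβ : 0 < β) (p d N : ℕ) :
    ∑ n ∈ Finset.range N, uD β p d n
      ≤ (β/(β+1))^d * (∑ n ∈ Finset.range N, uD β p 0 n)^(d+1) := by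
  have hb1 : (0:ℝ) < β + 1 := by linarith
  have hq0 : (0:ℝ) ≤ β/(β+1) := by positivity
  have hS0 : (0:ℝ) ≤ ∑ n ∈ Finset.range N, uD β p 0 n :=
    Finset.sum_nonneg fun n _ => uD_nonneg hβ p 0 n
  induction d with
  | zero => simp
  | succ d ih =>
    have h2 : ∑ n ∈ Finset.range N, uD β p (d+1) n
        = (β/(β+1)) * ∑ n ∈ Finset.range N,
            ∑ m ∈ Finset.range (n+1), uD β p 0 m * uD β p d (n-m) := by
      rw [Finset.mul_sum]
      exact Finset.sum_congr rfl fun n _ => by rw [uD_C2 hβ, ← Finset.mul_sum]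
    rw [h2]
    have h3 := conv_partial_le (uD_nonneg hβ p 0) (uD_nonneg hβ p d) N
    calc (β/(β+1)) * ∑ n ∈ Finset.range N,
            ∑ m ∈ Finset.range (n+1), uD β p 0 m * uD β p d (n-m)
        ≤ (β/(β+1)) * ((∑ n ∈ Finset.range N, uD β p 0 n)
            * (∑ n ∈ Finset.range N, uD β p d n)) :=
          mul_le_mul_of_nonneg_left h3 hq0
      _ ≤ (β/(β+1)) * ((∑ n ∈ Finset.range N, uD β p 0 n)
            * ((β/(β+1))^d * (∑ n ∈ Finset.range N, uD β p 0 n)^(d+1))) := by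
          apply mul_le_mul_of_nonneg_left _ hq0
          exact mul_le_mul_of_nonneg_left ih hS0
      _ = (β/(β+1))^(d+1) * (∑ n ∈ Finset.range N, uD β p 0 n)^(d+1+1) := by ring

lemma sum_range_uD0_le {β : ℝ} (hβ : 0 < β) {p : ℕ} (hp : 0 < p) (N : ℕ) :
    ∑ n ∈ Finset.range N, uD β p 0 n ≤ (β+1)/β := by
  have hb1 : (0:ℝ) < β + 1 := by linarith
  induction N with
  | zero => simp; positivity
  | succ N ih =>
    have hS0 : (0:ℝ) ≤ ∑ n ∈ Finset.range N, uD β p 0 n :=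
      Finset.sum_nonneg fun n _ => uD_nonneg hβ p 0 n
    have hc0 : (0:ℝ) ≤ (β/(β+1)) * ∑ n ∈ Finset.range N, uD β p 0 n := by positivity
    have hc1 : (β/(β+1)) * ∑ n ∈ Finset.range N, uD β p 0 n ≤ 1 := by
      calc (β/(β+1)) * ∑ n ∈ Finset.range N, uD β p 0 n
          ≤ (β/(β+1)) * ((β+1)/β) := mul_le_mul_of_nonneg_left ih (by positivity)
        _ = 1 := by field_simp
    have h1 : ∑ n ∈ Finset.range (N+1), uD β p 0 n
        = 1 + (1/(β+1)) * ∑ n ∈ Finset.range N, uD β p p n := by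
      rw [Finset.sum_range_succ' (uD β p 0) N, uD_zero_zero, Finset.mul_sum]
      rw [add_comm]
      congr 1
      exact Finset.sum_congr rfl fun n _ => uD_C3 hβ hp n
    rw [h1]
    have h2 : ∑ n ∈ Finset.range N, uD β p p n
        ≤ (β/(β+1))^p * (∑ n ∈ Finset.range N, uD β p 0 n)^(p+1) :=
      sum_range_uD_d_le hβ p p N
    have h3 : (β/(β+1))^p * (∑ n ∈ Finset.range N, uD β p 0 n)^(p+1)
        = ((β/(β+1)) * ∑ n ∈ Finset.range N, uD β p 0 n)^p
            * ∑ n ∈ Finset.range N, uD β p 0 n := by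
      rw [mul_pow]; ring
    have h4 : ((β/(β+1)) * ∑ n ∈ Finset.range N, uD β p 0 n)^p ≤ 1 :=
      pow_le_one₀ hc0 hc1
    have h5 : (β/(β+1))^p * (∑ n ∈ Finset.range N, uD β p 0 n)^(p+1) ≤ (β+1)/β := by
      rw [h3]
      calc ((β/(β+1)) * ∑ n ∈ Finset.range N, uD β p 0 n)^p
              * ∑ n ∈ Finset.range N, uD β p 0 n
          ≤ 1 * ((β+1)/β) := mul_le_mul h4 ih hS0 zero_le_one
        _ = (β+1)/β := one_mul _
    have h6 : (1/(β+1)) * ∑ n ∈ Finset.range N, uD β p p n ≤ (1/(β+1)) * ((β+1)/β) :=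
      mul_le_mul_of_nonneg_left (le_trans h2 h5) (by positivity)
    have h7 : (1/(β+1)) * ((β+1)/β) = 1/β := by field_simp
    have h8 : 1 + 1/β = (β+1)/β := by field_simp
    linarith

lemma summable_uD0 {β : ℝ} (hβ : 0 < β) {p : ℕ} (hp : 0 < p) : Summable (uD β p 0) :=
  summable_of_sum_range_le (uD_nonneg hβ p 0) (sum_range_uD0_le hβ hp)

lemma summable_uDd {β : ℝ} (hβ : 0 < β) {p : ℕ} (hp : 0 < p) (d : ℕ) :
    Summable (uD β p d) := by
  have hb1 : (0:ℝ) < β + 1 := by linarith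
  apply summable_of_sum_range_le (uD_nonneg hβ p d)
    (c := (β/(β+1))^d * ((β+1)/β)^(d+1))
  intro N
  refine le_trans (sum_range_uD_d_le hβ p d N) ?_
  apply mul_le_mul_of_nonneg_left _ (by positivity)
  apply pow_le_pow_left₀ (Finset.sum_nonneg fun n _ => uD_nonneg hβ p 0 n)
  exact sum_range_uD0_le hβ hp N

lemma vS_le_uD0 {β : ℝ} (hβ : 0 < β) (p n : ℕ) : vS β p n ≤ uD β p 0 n := by
  match n with
  | 0 =>
    rw [vS_zero, uD_zero_zero]
    norm_num
  | (n+1) =>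
    rw [uD_C1]
    have h1 : vS β p (n+1) * uD β p 0 (n - n) ≤
        ∑ m ∈ Finset.range (n+1), vS β p (m+1) * uD β p 0 (n-m) :=
      Finset.single_le_sum
        (f := fun m => vS β p (m+1) * uD β p 0 (n-m))
        (fun m _ => mul_nonneg (vS_nonneg hβ p _) (uD_nonneg hβ p 0 _))
        (Finset.self_mem_range_succ n)
    rw [Nat.sub_self, uD_zero_zero, mul_one] at h1
    exact h1

lemma summable_vS {β : ℝ} (hβ : 0 < β) {p : ℕ} (hp : 0 < p) : Summable (vS β p) :=
  Summable.of_nonneg_of_le (vS_nonneg hβ p) (vS_le_uD0 hβ p) (summable_uD0 hβ hp)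

lemma tsum_conv {f g : ℕ → ℝ} (hf0 : ∀ n, 0 ≤ f n) (hg0 : ∀ n, 0 ≤ g n)
    (hf : Summable f) (hg : Summable g) :
    (∑' n : ℕ, ∑ m ∈ Finset.range (n+1), f m * g (n-m)) = (∑' n, f n) * (∑' n, g n) ∧
    Summable (fun n : ℕ => ∑ m ∈ Finset.range (n+1), f m * g (n-m)) := by
  have hfn : Summable (fun n => ‖f n‖) := by
    simpa [Real.norm_eq_abs] using hf.abs
  have hgn : Summable (fun n => ‖g n‖) := by
    simpa [Real.norm_eq_abs] using hg.abs
  have hprod : Summable (fun x : ℕ × ℕ => f x.1 * g x.2) :=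
    summable_mul_of_summable_norm hfn hgn
  exact ⟨(hf.tsum_mul_tsum_eq_tsum_sum_range hg hprod).symm,
    (summable_norm_sum_mul_range_of_summable_norm hfn hgn).of_norm⟩

lemma crossProb_zero_eq' {β : ℝ} (hβ : 0 < β) (p : ℕ) :
    crossProb β p 0 = (β/(β+1)) * ∑' n, uD β p 0 n := by
  have h1 : (β:ℝ) + 1 ≠ 0 := by linarith
  have hb : (β:ℝ) ≠ 0 := ne_of_gt hβ
  rw [crossProb, ← tsum_mul_left]
  apply tsum_congr
  intro n
  rw [weakCount_eq, uD]
  rw [show p*n+0+1 = (p*n+0)+1 by ring, show (p+1)*n+0+1 = ((p+1)*n+0)+1 by ring,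
    pow_succ, pow_succ]
  field_simp
  ring

lemma meetProb_zero_eq' (β : ℝ) (p : ℕ) :
    meetProb β p 0 = 2 * ∑' n, vS β p n := by
  rw [meetProb, if_pos rfl]
  rfl

lemma main_core {β : ℝ} (hβ : 0 < β) {p : ℕ} (hp : 0 < p) :
    meetProb β p 0 = 2 * (1 - β / (β + 1) * (1 / crossProb β p 0)) ∧
    ((p : ℝ) ≤ β → meetProb β p 0 = 2 / (β + 1)) := by
  have hb1 : (0:ℝ) < β + 1 := by linarith
  have h1 : (β:ℝ) + 1 ≠ 0 := by linarith
  have hbne : (β:ℝ) ≠ 0 := ne_of_gt hβ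
  have hsum0 : Summable (uD β p 0) := summable_uD0 hβ hp
  set A : ℝ := ∑' n, uD β p 0 n with hA
  have hA1 : 1 ≤ A := by
    have := hsum0.le_tsum 0 (fun j _ => uD_nonneg hβ p 0 j)
    rwa [uD_zero_zero] at this
  have hApos : (0:ℝ) < A := lt_of_lt_of_le one_pos hA1
  have hAne : A ≠ 0 := ne_of_gt hApos
  have hAle : A ≤ (β+1)/β := hsum0.tsum_le_of_sum_range_le (sum_range_uD0_le hβ hp)
  have hΦeq : crossProb β p 0 = (β/(β+1)) * A := crossProb_zero_eq' hβ p
  have hΦpos : 0 < crossProb β p 0 := by rw [hΦeq]; positivity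
  have hΦne : crossProb β p 0 ≠ 0 := ne_of_gt hΦpos
  have hsumv : Summable (vS β p) := summable_vS hβ hp
  set B : ℝ := ∑' n, vS β p n with hB
  have hconv := tsum_conv (vS_nonneg hβ p) (uD_nonneg hβ p 0) hsumv hsum0
  have hE1 : A = 1 + B * A := by
    calc A = ∑' n, ((if n = 0 then (1:ℝ) else 0)
          + ∑ m ∈ Finset.range (n+1), vS β p m * uD β p 0 (n-m)) :=
        tsum_congr fun n => uD_conv p n
      _ = (∑' n : ℕ, if n = 0 then (1:ℝ) else 0)
          + ∑' n : ℕ, ∑ m ∈ Finset.range (n+1), vS β p m * uD β p 0 (n-m) :=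
        Summable.tsum_add ((hasSum_ite_eq 0 (1:ℝ)).summable) hconv.2
      _ = 1 + B * A := by rw [(hasSum_ite_eq 0 (1:ℝ)).tsum_eq, hconv.1]
  have hmeet : meetProb β p 0 = 2 * B := meetProb_zero_eq' β p
  have hBA : B = 1 - 1/A := by
    field_simp
    linarith [hE1]
  have hfrac : β / (β + 1) * (1 / crossProb β p 0) = 1/A := by
    rw [hΦeq]
    field_simp
  have part1 : meetProb β p 0 = 2 * (1 - β / (β + 1) * (1 / crossProb β p 0)) := by
    rw [hmeet, hBA, hfrac]
  refine ⟨part1, fun hpβ => ?_⟩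
  -- functional equation
  have hE2 : ∀ d, (∑' n, uD β p (d+1) n) = (β/(β+1)) * A * (∑' n, uD β p d n) := by
    intro d
    have hc := tsum_conv (uD_nonneg hβ p 0) (uD_nonneg hβ p d) hsum0 (summable_uDd hβ hp d)
    calc (∑' n, uD β p (d+1) n)
        = ∑' n, (β/(β+1)) * ∑ m ∈ Finset.range (n+1), uD β p 0 m * uD β p d (n-m) :=
          tsum_congr fun n => by rw [uD_C2 hβ, Finset.mul_sum]
      _ = (β/(β+1)) * ∑' n, ∑ m ∈ Finset.range (n+1), uD β p 0 m * uD β p d (n-m) :=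
          tsum_mul_left
      _ = (β/(β+1)) * A * (∑' n, uD β p d n) := by rw [hc.1, mul_assoc]
  have hAd : ∀ d, (∑' n, uD β p d n) = ((β/(β+1)) * A)^d * A := by
    intro d
    induction d with
    | zero => simp [hA]
    | succ d ih =>
      rw [hE2 d, ih]
      ring
  have hE3 : A = 1 + (1/(β+1)) * (∑' n, uD β p p n) := by
    have h0 := hsum0.tsum_eq_zero_add
    rw [uD_zero_zero] at h0
    rw [hA, h0]
    congr 1
    rw [← tsum_mul_left]
    exact tsum_congr fun n => uD_C3 hβ hp n
  set Φ := crossProb β p 0 with hΦdef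
  have hfe : Φ = β/(β+1) + (1/(β+1)) * Φ^(p+1) := by
    have h2 := hE3
    rw [hAd p] at h2
    rw [hΦeq, pow_succ]
    linear_combination (β/(β+1)) * h2
  have hΦle1 : Φ ≤ 1 := by
    rw [hΦeq]
    calc (β/(β+1)) * A ≤ (β/(β+1)) * ((β+1)/β) :=
        mul_le_mul_of_nonneg_left hAle (by positivity)
      _ = 1 := by field_simp
  have hΦ1 : Φ = 1 := by
    by_contra hne
    have hlt : Φ < 1 := lt_of_le_of_ne hΦle1 hne
    have hg := geom_sum_mul Φ p
    have hfe0 : Φ^(p+1) - (β+1)*Φ + β = 0 := by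
      field_simp at hfe
      linarith [hfe]
    have hkey : (1 - Φ) * (β - Φ * ∑ i ∈ Finset.range p, Φ^i) = 0 := by
      linear_combination Φ * hg + hfe0
    have hGp : (∑ i ∈ Finset.range p, Φ^i) ≤ (p:ℝ) := by
      calc (∑ i ∈ Finset.range p, Φ^i) ≤ ∑ i ∈ Finset.range p, (1:ℝ) :=
          Finset.sum_le_sum fun i _ => pow_le_one₀ hΦpos.le hΦle1
        _ = p := by simp
    have hppos : (0:ℝ) < p := by exact_mod_cast hp
    have h2 : Φ * (∑ i ∈ Finset.range p, Φ^i) < β := by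
      have h3 : Φ * (∑ i ∈ Finset.range p, Φ^i) ≤ Φ * p :=
        mul_le_mul_of_nonneg_left hGp hΦpos.le
      have h4 : Φ * p < 1 * p := mul_lt_mul_of_pos_right hlt hppos
      linarith
    rcases mul_eq_zero.mp hkey with h | h
    · linarith
    · linarith
  rw [part1, hΦ1]
  field_simp; ring

end MeetAux

theorem meetProb_zero_eq (β : ℝ) (hβ : 0 < β) (p : ℕ) (hp : 0 < p) :
    meetProb β p 0 = 2 * (1 - β / (β + 1) * (1 / crossProb β p 0)) ∧
    ((p : ℝ) ≤ β → meetProb β p 0 = 2 / (β + 1)) :=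
  MeetAux.main_core hβ hp
end

section
/- For each β > 0, let α_β = sup{α > 0 : the β-biased monotonic random walk crosses y = αx with probability 1}. Then ⌊β⌋ ≤ α_β ≤ ⌊β⌋ + 1. In particular, with p = ⌊β⌋ ≥ 1 and β not an integer, the polynomial f(y) = y^{p+1} + y^p + ⋯ + y − β has a root in (0,1). -/
/-- The number of monotonic lattice paths from `(0,0)` to `(n, ⌊α n⌋)` all of whose
lattice points lie weakly below the line `y = α x`. -/
noncomputable def weakCountR (α : ℝ) (n : ℕ) : ℕ :=
  Nat.card {f : Fin (n + ⌊α * n⌋₊) → Bool //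
    upsIn f (n + ⌊α * n⌋₊) = ⌊α * n⌋₊ ∧
    ∀ k ≤ n + ⌊α * n⌋₊, (upsIn f k : ℝ) ≤ α * rightsIn f k}

/-- `crossProbR β α` is the probability `Φ_β(α,0)` that the `β`-biased monotonic random
walk starting at the origin (moving right with probability `1/(β+1)` and up with
probability `β/(β+1)`) crosses the line `y = α x`, i.e. reaches a lattice point strictly
above it; decomposing by the first lattice point strictly above the line, which is of the
form `(n, ⌊α n⌋ + 1)`, gives this series. -/
noncomputable def crossProbR (β α : ℝ) : ℝ :=
  ∑' n : ℕ, (weakCountR α n : ℝ) * β ^ (⌊α * n⌋₊ + 1) / (β + 1) ^ (n + ⌊α * n⌋₊ + 1)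

set_option linter.unreachableTactic false
set_option linter.unusedTactic false

namespace MRW
open Finset

def toSeq {L : ℕ} (f : Fin L → Bool) : ℕ → Bool :=
  fun i => if h : i < L then f ⟨i, h⟩ else false

def cnt (g : ℕ → Bool) (k : ℕ) : ℕ := ((Finset.range k).filter (fun i => g i = true)).card

lemma cnt_succ (g : ℕ → Bool) (k : ℕ) :
    cnt g (k + 1) = cnt g k + (if g k then 1 else 0) := by
  unfold cnt
  rw [Finset.range_add_one, Finset.filter_insert]
  by_cases h : g k = true
  · rw [if_pos h, Finset.card_insert_of_notMem (by simp), if_pos h]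
  · rw [if_neg h, if_neg (by simpa using h), add_zero]

lemma cnt_congr {g g' : ℕ → Bool} (k : ℕ) (h : ∀ i < k, g i = g' i) :
    cnt g k = cnt g' k := by
  unfold cnt
  congr 1
  apply Finset.filter_congr
  intro i hi
  rw [h i (Finset.mem_range.mp hi)]

lemma upsIn_eq_cnt {L : ℕ} (f : Fin L → Bool) {k : ℕ} (hk : k ≤ L) :
    upsIn f k = cnt (toSeq f) k := by
  unfold upsIn cnt
  apply Finset.card_bij (fun (i : Fin L) _ => (i : ℕ))
  · intro i hi
    simp only [Finset.mem_filter, Finset.mem_univ, true_and] at hi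
    simp only [Finset.mem_filter, Finset.mem_range]
    refine ⟨hi.1, ?_⟩
    simp [toSeq, i.isLt, hi.2]
  · intro a _ b _ hab
    exact Fin.ext hab
  · intro j hj
    simp only [Finset.mem_filter, Finset.mem_range] at hj
    refine ⟨⟨j, lt_of_lt_of_le hj.1 hk⟩, ?_, rfl⟩
    simp only [Finset.mem_filter, Finset.mem_univ, true_and]
    refine ⟨hj.1, ?_⟩
    have := hj.2
    simpa [toSeq, lt_of_lt_of_le hj.1 hk] using this

lemma upsIn_add_rightsIn {L : ℕ} (f : Fin L → Bool) {k : ℕ} (hk : k ≤ L) :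
    upsIn f k + rightsIn f k = k := by
  classical
  have h1 := Finset.card_filter_add_card_filter_not
    (s := Finset.univ.filter (fun i : Fin L => (i : ℕ) < k)) (p := fun i => f i = true)
  rw [Finset.filter_filter, Finset.filter_filter] at h1
  have h2 : (Finset.univ.filter (fun i : Fin L => (i : ℕ) < k)).card = k := by
    conv_rhs => rw [← Finset.card_range k]
    apply Finset.card_bij (fun (i : Fin L) _ => (i : ℕ))
    · intro i hi
      simp only [Finset.mem_filter, Finset.mem_univ, true_and] at hi
      exact Finset.mem_range.mpr hi
    · intro a _ b _ hab
      exact Fin.ext hab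
    · intro j hj
      exact ⟨⟨j, lt_of_lt_of_le (Finset.mem_range.mp hj) hk⟩,
        Finset.mem_filter.mpr ⟨Finset.mem_univ _, Finset.mem_range.mp hj⟩, rfl⟩
  rw [h2] at h1
  have h3 : rightsIn f k
      = (Finset.univ.filter (fun a : Fin L => (a : ℕ) < k ∧ ¬ f a = true)).card := by
    unfold rightsIn
    congr 1
    apply Finset.filter_congr
    intro i _
    simp
  rw [upsIn, h3]
  exact h1

lemma rightsIn_eq {L : ℕ} (f : Fin L → Bool) {k : ℕ} (hk : k ≤ L) :
    rightsIn f k = k - upsIn f k := by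
  have := upsIn_add_rightsIn f hk
  omega

lemma upsIn_le {L : ℕ} (f : Fin L → Bool) {k : ℕ} (hk : k ≤ L) : upsIn f k ≤ k := by
  have := upsIn_add_rightsIn f hk; omega

end MRW

namespace MRW
open Finset

lemma toSeq_snoc {T : ℕ} (f : Fin T → Bool) (b : Bool) (j : ℕ) (hj : j < T) :
    toSeq (Fin.snoc f b : Fin (T+1) → Bool) j = toSeq f j := by
  unfold toSeq
  rw [dif_pos (Nat.lt_succ_of_lt hj), dif_pos hj]
  have : (⟨j, Nat.lt_succ_of_lt hj⟩ : Fin (T+1)) = Fin.castSucc ⟨j, hj⟩ := rfl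
  rw [this, Fin.snoc_castSucc]

lemma toSeq_snoc_last {T : ℕ} (f : Fin T → Bool) (b : Bool) :
    toSeq (Fin.snoc f b : Fin (T+1) → Bool) T = b := by
  unfold toSeq
  rw [dif_pos (Nat.lt_succ_self T)]
  have : (⟨T, Nat.lt_succ_self T⟩ : Fin (T+1)) = Fin.last T := rfl
  rw [this, Fin.snoc_last]

lemma upsIn_snoc {T : ℕ} (f : Fin T → Bool) (b : Bool) {k : ℕ} (hk : k ≤ T) :
    upsIn (Fin.snoc f b : Fin (T+1) → Bool) k = upsIn f k := by
  rw [upsIn_eq_cnt _ (Nat.le_succ_of_le hk), upsIn_eq_cnt _ hk]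
  exact cnt_congr k (fun i hi => toSeq_snoc f b i (lt_of_lt_of_le hi hk))

lemma upsIn_snoc_top {T : ℕ} (f : Fin T → Bool) (b : Bool) :
    upsIn (Fin.snoc f b : Fin (T+1) → Bool) (T+1) = upsIn f T + (if b then 1 else 0) := by
  rw [upsIn_eq_cnt _ (le_refl (T+1)), cnt_succ, toSeq_snoc_last,
    cnt_congr T (fun i hi => toSeq_snoc f b i hi), ← upsIn_eq_cnt _ (le_refl T)]

lemma rightsIn_snoc {T : ℕ} (f : Fin T → Bool) (b : Bool) {k : ℕ} (hk : k ≤ T) :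
    rightsIn (Fin.snoc f b : Fin (T+1) → Bool) k = rightsIn f k := by
  rw [rightsIn_eq _ (Nat.le_succ_of_le hk), rightsIn_eq _ hk, upsIn_snoc f b hk]

lemma rightsIn_snoc_top {T : ℕ} (f : Fin T → Bool) (b : Bool) :
    rightsIn (Fin.snoc f b : Fin (T+1) → Bool) (T+1) = rightsIn f T + (if b then 0 else 1) := by
  have h1 := upsIn_add_rightsIn (Fin.snoc f b : Fin (T+1) → Bool) (le_refl (T+1))
  have h2 := upsIn_add_rightsIn f (le_refl T)
  rw [upsIn_snoc_top] at h1
  cases b <;> simp at h1 ⊢ <;> omega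

/-- weight of a path -/
noncomputable def W {T : ℕ} (u r : ℝ) (g : Fin T → Bool) : ℝ :=
  u ^ upsIn g T * r ^ rightsIn g T

lemma W_snoc {T : ℕ} (u r : ℝ) (f : Fin T → Bool) (b : Bool) :
    W u r (Fin.snoc f b : Fin (T+1) → Bool) = W u r f * (if b then u else r) := by
  unfold W
  rw [upsIn_snoc_top, rightsIn_snoc_top]
  cases b <;> simp [pow_succ] <;> ring_nf

lemma sum_snoc {M : Type*} [AddCommMonoid M] (T : ℕ) (F : (Fin (T+1) → Bool) → M) :
    ∑ g : Fin (T+1) → Bool, F g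
      = ∑ f : Fin T → Bool, (F (Fin.snoc f true) + F (Fin.snoc f false)) := by
  rw [← (Fin.snocEquiv (fun _ => Bool)).sum_comp F, Fintype.sum_prod_type, Fintype.sum_bool]
  rw [← Finset.sum_add_distrib]
  apply Finset.sum_congr rfl
  intro f _
  congr 1 <;> simp [Fin.snocEquiv]

lemma sum_W (u r : ℝ) (T : ℕ) :
    ∑ g : Fin T → Bool, W u r g = (u + r) ^ T := by
  induction T with
  | zero =>
    rw [Fintype.sum_unique]
    simp [W, upsIn, rightsIn]
  | succ T ih =>
    rw [sum_snoc, pow_succ, ← ih, Finset.sum_mul]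
    apply Finset.sum_congr rfl
    intro f _
    rw [W_snoc, W_snoc]
    simp
    ring

end MRW

namespace MRW
open Finset
open scoped Classical

def NonX (α : ℝ) {T : ℕ} (g : Fin T → Bool) : Prop :=
  ∀ k ≤ T, (upsIn g k : ℝ) ≤ α * rightsIn g k

def Pre (α : ℝ) {T : ℕ} (g : Fin T → Bool) : Prop :=
  NonX α g ∧ ¬ ((upsIn g T : ℝ) + 1 ≤ α * rightsIn g T)

noncomputable def NC (α u r : ℝ) (T : ℕ) : ℝ :=
  ∑ g : Fin T → Bool, if NonX α g then W u r g else 0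

noncomputable def G (α u r : ℝ) (T : ℕ) : ℝ :=
  ∑ n ∈ (Finset.range T).filter (fun n : ℕ => n + ⌊α * (n:ℝ)⌋₊ + 1 ≤ T),
    (weakCountR α n : ℝ) * u ^ (⌊α * (n:ℝ)⌋₊ + 1) * r ^ n * (u + r) ^ (T - (n + ⌊α * (n:ℝ)⌋₊ + 1))

variable {α u r : ℝ}

lemma nonX_snoc_false {T : ℕ} (hα : 0 ≤ α) (f : Fin T → Bool) :
    NonX α (Fin.snoc f false : Fin (T+1) → Bool) ↔ NonX α f := by
  constructor
  · intro h k hk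
    have := h k (Nat.le_succ_of_le hk)
    rwa [upsIn_snoc f false hk, rightsIn_snoc f false hk] at this
  · intro h k hk
    rcases Nat.lt_or_ge k (T+1) with hk' | hk'
    · have hkT : k ≤ T := Nat.lt_succ_iff.mp hk'
      rw [upsIn_snoc f false hkT, rightsIn_snoc f false hkT]
      exact h k hkT
    · have hkT : k = T + 1 := le_antisymm hk hk'
      subst hkT
      rw [upsIn_snoc_top, rightsIn_snoc_top]
      simp only [if_neg (by simp : ¬ (false = true)), add_zero]
      have := h T (le_refl T)
      have h2 : (rightsIn f T : ℝ) ≤ (rightsIn f T : ℝ) + 1 := by linarith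
      calc (upsIn f T : ℝ) ≤ α * rightsIn f T := this
        _ ≤ α * (rightsIn f T + 1) := by nlinarith
        _ = α * ((rightsIn f T + 1 : ℕ) : ℝ) := by push_cast; ring

lemma nonX_snoc_true {T : ℕ} (f : Fin T → Bool) :
    NonX α (Fin.snoc f true : Fin (T+1) → Bool) ↔
      (NonX α f ∧ ((upsIn f T : ℝ) + 1 ≤ α * rightsIn f T)) := by
  constructor
  · intro h
    constructor
    · intro k hk
      have := h k (Nat.le_succ_of_le hk)
      rwa [upsIn_snoc f true hk, rightsIn_snoc f true hk] at this
    · have := h (T+1) (le_refl _)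
      rw [upsIn_snoc_top, rightsIn_snoc_top] at this
      simpa using this
  · rintro ⟨h1, h2⟩ k hk
    rcases Nat.lt_or_ge k (T+1) with hk' | hk'
    · have hkT : k ≤ T := Nat.lt_succ_iff.mp hk'
      rw [upsIn_snoc f true hkT, rightsIn_snoc f true hkT]
      exact h1 k hkT
    · have hkT : k = T + 1 := le_antisymm hk hk'
      subst hkT
      rw [upsIn_snoc_top, rightsIn_snoc_top]
      simpa using h2

lemma floor_add_strictMono (hα : 0 < α) {a b : ℕ} (h : a < b) :
    a + ⌊α * a⌋₊ < b + ⌊α * b⌋₊ := by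
  have : ⌊α * a⌋₊ ≤ ⌊α * b⌋₊ := by
    apply Nat.floor_le_floor
    have : (a : ℝ) ≤ b := by exact_mod_cast h.le
    nlinarith
  omega

lemma pre_sum (hα : 0 < α) (T : ℕ) :
    ∑ g : Fin T → Bool, (if Pre α g then W u r g else 0)
      = ∑ n ∈ (Finset.range (T+1)).filter (fun n : ℕ => n + ⌊α * (n:ℝ)⌋₊ = T),
          (weakCountR α n : ℝ) * u ^ ⌊α * (n:ℝ)⌋₊ * r ^ n := by
  set D := (Finset.range (T+1)).filter (fun n : ℕ => n + ⌊α * (n:ℝ)⌋₊ = T) with hD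
  -- helper: Pre g produces a witness in D
  have hwit : ∀ g : Fin T → Bool, Pre α g →
      rightsIn g T ∈ D ∧ upsIn g T = ⌊α * (rightsIn g T)⌋₊ := by
    intro g ⟨hnx, hviol⟩
    push_neg at hviol
    have hsum := upsIn_add_rightsIn g (le_refl T)
    have hle := hnx T (le_refl T)
    have hfloor : ⌊α * (rightsIn g T : ℕ)⌋₊ = upsIn g T := by
      rw [Nat.floor_eq_iff (by positivity)]
      constructor
      · exact hle
      · push_cast; linarith
    refine ⟨?_, hfloor.symm⟩
    rw [hD, Finset.mem_filter, Finset.mem_range]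
    constructor
    · omega
    · rw [hfloor]; omega
  rcases Finset.eq_empty_or_nonempty D with hDe | ⟨n₀, hn₀⟩
  · rw [hDe, Finset.sum_empty]
    apply Finset.sum_eq_zero
    intro g _
    rw [if_neg]
    intro hpre
    have := (hwit g hpre).1
    rw [hDe] at this
    exact absurd this (Finset.notMem_empty _)
  · have hn₀' := hn₀
    rw [hD, Finset.mem_filter, Finset.mem_range] at hn₀'
    obtain ⟨hn₀T, hn₀eq⟩ := hn₀'
    have hsingle : D = {n₀} := by
      apply Finset.eq_singleton_iff_unique_mem.mpr
      refine ⟨hn₀, ?_⟩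
      intro n hn
      rw [hD, Finset.mem_filter, Finset.mem_range] at hn
      by_contra hne
      rcases Nat.lt_or_ge n n₀ with h | h
      · have := floor_add_strictMono hα h; omega
      · have : n₀ < n := by omega
        have := floor_add_strictMono hα this; omega
    rw [hsingle, Finset.sum_singleton]
    -- identify the Pre set
    have hiff : ∀ g : Fin T → Bool,
        Pre α g ↔ (upsIn g (n₀ + ⌊α * n₀⌋₊) = ⌊α * n₀⌋₊ ∧ NonX α g) := by
      intro g
      constructor
      · intro hpre
        obtain ⟨hmem, hup⟩ := hwit g hpre
        rw [hsingle, Finset.mem_singleton] at hmem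
        rw [hmem] at hup
        exact ⟨by rw [hn₀eq, hup], hpre.1⟩
      · rintro ⟨hup, hnx⟩
        refine ⟨hnx, ?_⟩
        have hsum := upsIn_add_rightsIn g (le_refl T)
        rw [hn₀eq] at hup
        have hrg : rightsIn g T = n₀ := by omega
        rw [hup, hrg]
        intro hcon
        have := Nat.lt_floor_add_one (α * (n₀ : ℕ))
        push_cast at hcon this
        linarith
    -- compute the sum
    have hWconst : ∀ g : Fin T → Bool, Pre α g → W u r g = u ^ ⌊α * n₀⌋₊ * r ^ n₀ := by
      intro g hpre
      obtain ⟨hup, hnx⟩ := (hiff g).mp hpre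
      have hsum := upsIn_add_rightsIn g (le_refl T)
      rw [hn₀eq] at hup
      have hrg : rightsIn g T = n₀ := by omega
      unfold W
      rw [hup, hrg]
    calc ∑ g : Fin T → Bool, (if Pre α g then W u r g else 0)
        = ∑ g : Fin T → Bool,
            (if Pre α g then u ^ ⌊α * n₀⌋₊ * r ^ n₀ else 0) := by
          apply Finset.sum_congr rfl
          intro g _
          by_cases h : Pre α g
          · rw [if_pos h, if_pos h, hWconst g h]
          · rw [if_neg h, if_neg h]
      _ = ((Finset.univ.filter (fun g : Fin T → Bool => Pre α g)).card : ℝ)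
            * (u ^ ⌊α * n₀⌋₊ * r ^ n₀) := by
          rw [← Finset.sum_filter, Finset.sum_const, nsmul_eq_mul]
      _ = (weakCountR α n₀ : ℝ) * u ^ ⌊α * n₀⌋₊ * r ^ n₀ := by
          rw [mul_assoc]
          congr 2
          -- card equality
          have hcard : (Finset.univ.filter (fun g : Fin T → Bool => Pre α g)).card
              = weakCountR α n₀ := by
            subst hn₀eq
            unfold weakCountR
            rw [Nat.card_eq_fintype_card, Fintype.card_subtype]
            congr 1
            apply Finset.filter_congr
            intro g _
            rw [hiff g]
            unfold NonX
            tauto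
          exact_mod_cast congrArg (Nat.cast : ℕ → ℝ) hcard

end MRW

namespace MRW
open Finset
open scoped Classical

variable {α u r : ℝ}

lemma core (hα : 0 < α) (u r : ℝ) (T : ℕ) :
    G α u r T + NC α u r T = (u + r) ^ T := by
  induction T with
  | zero =>
    rw [G, NC]
    simp only [Finset.range_zero, Finset.filter_empty, Finset.sum_empty, zero_add]
    have hnx : ∀ g : Fin 0 → Bool, NonX α g := by
      intro g k hk
      rw [Nat.le_zero.mp hk]
      simp [upsIn, rightsIn]
    rw [Fintype.sum_unique, if_pos (hnx _), pow_zero]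
    simp [W, upsIn, rightsIn]
  | succ T ih =>
    have hNC : NC α u r (T+1)
        = (u + r) * NC α u r T
          - u * ∑ n ∈ (Finset.range (T+1)).filter (fun n : ℕ => n + ⌊α * (n:ℝ)⌋₊ = T),
              (weakCountR α n : ℝ) * u ^ ⌊α * (n:ℝ)⌋₊ * r ^ n := by
      rw [← pre_sum hα T, NC, sum_snoc]
      have hpt : ∀ f : Fin T → Bool,
          (if NonX α (Fin.snoc f true : Fin (T+1) → Bool)
              then W u r (Fin.snoc f true : Fin (T+1) → Bool) else 0)
          + (if NonX α (Fin.snoc f false : Fin (T+1) → Bool)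
              then W u r (Fin.snoc f false : Fin (T+1) → Bool) else 0)
          = (u + r) * (if NonX α f then W u r f else 0)
            - u * (if Pre α f then W u r f else 0) := by
        intro f
        have e1 : (if (true : Bool) then u else r) = u := rfl
        have e2 : (if (false : Bool) then u else r) = r := rfl
        rw [W_snoc, W_snoc, e1, e2]
        by_cases h1 : NonX α f
        · by_cases h2 : (upsIn f T : ℝ) + 1 ≤ α * rightsIn f T
          · rw [if_pos ((nonX_snoc_true f).mpr ⟨h1, h2⟩),
              if_pos ((nonX_snoc_false hα.le f).mpr h1), if_pos h1,
              if_neg (fun hp => hp.2 h2)]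
            ring
          · rw [if_neg (fun hx => h2 ((nonX_snoc_true f).mp hx).2),
              if_pos ((nonX_snoc_false hα.le f).mpr h1), if_pos h1,
              if_pos ⟨h1, h2⟩]
            ring
        · rw [if_neg (fun hx => h1 ((nonX_snoc_true f).mp hx).1),
            if_neg (fun hx => h1 ((nonX_snoc_false hα.le f).mp hx)),
            if_neg h1, if_neg (fun hp => h1 hp.1)]
          ring
      rw [Finset.sum_congr rfl (fun f _ => hpt f), Finset.sum_sub_distrib,
        ← Finset.mul_sum, ← Finset.mul_sum, NC]
    have hG : G α u r (T+1)
        = (u + r) * G α u r T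
          + ∑ n ∈ (Finset.range (T+1)).filter (fun n : ℕ => n + ⌊α * (n:ℝ)⌋₊ = T),
              (weakCountR α n : ℝ) * u ^ (⌊α * (n:ℝ)⌋₊ + 1) * r ^ n := by
      rw [G]
      have hsplit : (Finset.range (T+1)).filter (fun n : ℕ => n + ⌊α * (n:ℝ)⌋₊ + 1 ≤ T+1)
          = ((Finset.range T).filter (fun n : ℕ => n + ⌊α * (n:ℝ)⌋₊ + 1 ≤ T))
            ∪ ((Finset.range (T+1)).filter (fun n : ℕ => n + ⌊α * (n:ℝ)⌋₊ = T)) := by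
        ext n
        simp only [Finset.mem_filter, Finset.mem_range, Finset.mem_union]
        omega
      have hdisj : Disjoint
          ((Finset.range T).filter (fun n : ℕ => n + ⌊α * (n:ℝ)⌋₊ + 1 ≤ T))
          ((Finset.range (T+1)).filter (fun n : ℕ => n + ⌊α * (n:ℝ)⌋₊ = T)) := by
        rw [Finset.disjoint_left]
        intro n h1 h2
        simp only [Finset.mem_filter, Finset.mem_range] at h1 h2
        omega
      rw [hsplit, Finset.sum_union hdisj]
      congr 1
      · rw [G, Finset.mul_sum]
        apply Finset.sum_congr rfl
        intro n hn
        simp only [Finset.mem_filter, Finset.mem_range] at hn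
        have : T + 1 - (n + ⌊α * (n:ℝ)⌋₊ + 1) = (T - (n + ⌊α * (n:ℝ)⌋₊ + 1)) + 1 := by omega
        rw [this, pow_succ]
        ring
      · apply Finset.sum_congr rfl
        intro n hn
        simp only [Finset.mem_filter, Finset.mem_range] at hn
        have : T + 1 - (n + ⌊α * (n:ℝ)⌋₊ + 1) = 0 := by omega
        rw [this, pow_zero, mul_one]
    rw [hNC, hG]
    have hcancel : ∑ n ∈ (Finset.range (T+1)).filter (fun n : ℕ => n + ⌊α * (n:ℝ)⌋₊ = T),
        (weakCountR α n : ℝ) * u ^ (⌊α * (n:ℝ)⌋₊ + 1) * r ^ n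
        = u * ∑ n ∈ (Finset.range (T+1)).filter (fun n : ℕ => n + ⌊α * (n:ℝ)⌋₊ = T),
            (weakCountR α n : ℝ) * u ^ ⌊α * (n:ℝ)⌋₊ * r ^ n := by
      rw [Finset.mul_sum]
      apply Finset.sum_congr rfl
      intro n _
      rw [pow_succ]
      ring
    rw [hcancel, pow_succ]
    rw [← ih]
    ring

end MRW

namespace MRW
open Finset Filter
open scoped Classical Topology

variable {α β u r : ℝ}

lemma NC_nonneg (hu : 0 ≤ u) (hr : 0 ≤ r) (T : ℕ) : 0 ≤ NC α u r T := by
  apply Finset.sum_nonneg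
  intro g _
  by_cases h : NonX α g
  · rw [if_pos h]; exact mul_nonneg (pow_nonneg hu _) (pow_nonneg hr _)
  · rw [if_neg h]

lemma partial_sum_le (hα : 0 < α) (hu : 0 < u) (hr : 0 < r) (hur : u + r ≤ 1) (K : ℕ) :
    ∑ n ∈ Finset.range K, (weakCountR α n : ℝ) * u ^ (⌊α * (n:ℝ)⌋₊ + 1) * r ^ n ≤ 1 := by
  set T := K + ⌊α * (K:ℝ)⌋₊ + 1 with hT
  have hurpos : 0 < u + r := by linarith
  have hsub : Finset.range K ⊆ (Finset.range T).filter (fun n : ℕ => n + ⌊α * (n:ℝ)⌋₊ + 1 ≤ T) := by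
    intro n hn
    rw [Finset.mem_range] at hn
    rw [Finset.mem_filter, Finset.mem_range]
    have := floor_add_strictMono (α := α) hα hn
    omega
  have hnn : ∀ n ∈ (Finset.range T).filter (fun n : ℕ => n + ⌊α * (n:ℝ)⌋₊ + 1 ≤ T),
      0 ≤ (weakCountR α n : ℝ) * u ^ (⌊α * (n:ℝ)⌋₊ + 1) * r ^ n := by
    intro n _
    positivity
  have h1 : ∑ n ∈ Finset.range K, (weakCountR α n : ℝ) * u ^ (⌊α * (n:ℝ)⌋₊ + 1) * r ^ n
      ≤ ∑ n ∈ (Finset.range T).filter (fun n : ℕ => n + ⌊α * (n:ℝ)⌋₊ + 1 ≤ T),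
          (weakCountR α n : ℝ) * u ^ (⌊α * (n:ℝ)⌋₊ + 1) * r ^ n :=
    Finset.sum_le_sum_of_subset_of_nonneg hsub (fun n hn _ => hnn n hn)
  have h2 : (u + r) ^ T *
      ∑ n ∈ (Finset.range T).filter (fun n : ℕ => n + ⌊α * (n:ℝ)⌋₊ + 1 ≤ T),
          (weakCountR α n : ℝ) * u ^ (⌊α * (n:ℝ)⌋₊ + 1) * r ^ n ≤ G α u r T := by
    rw [G, Finset.mul_sum]
    apply Finset.sum_le_sum
    intro n hn
    have hnn' := hnn n hn
    have hle : (u + r) ^ T ≤ (u + r) ^ (T - (n + ⌊α * (n:ℝ)⌋₊ + 1)) :=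
      pow_le_pow_of_le_one hurpos.le hur (Nat.sub_le _ _)
    calc (u + r) ^ T * ((weakCountR α n : ℝ) * u ^ (⌊α * (n:ℝ)⌋₊ + 1) * r ^ n)
        ≤ (u + r) ^ (T - (n + ⌊α * (n:ℝ)⌋₊ + 1)) * ((weakCountR α n : ℝ) * u ^ (⌊α * (n:ℝ)⌋₊ + 1) * r ^ n) :=
          mul_le_mul_of_nonneg_right hle hnn'
      _ = (weakCountR α n : ℝ) * u ^ (⌊α * (n:ℝ)⌋₊ + 1) * r ^ n * (u + r) ^ (T - (n + ⌊α * (n:ℝ)⌋₊ + 1)) := by ring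
  have h3 : G α u r T ≤ (u + r) ^ T := by
    have h := core (α := α) hα u r T
    have h' := NC_nonneg (α := α) hu.le hr.le T
    linarith
  have h4 : (u + r) ^ T * ∑ n ∈ Finset.range K,
      (weakCountR α n : ℝ) * u ^ (⌊α * (n:ℝ)⌋₊ + 1) * r ^ n ≤ (u + r) ^ T * 1 := by
    rw [mul_one]
    calc _ ≤ (u + r) ^ T *
        ∑ n ∈ (Finset.range T).filter (fun n : ℕ => n + ⌊α * (n:ℝ)⌋₊ + 1 ≤ T),
          (weakCountR α n : ℝ) * u ^ (⌊α * (n:ℝ)⌋₊ + 1) * r ^ n :=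
        mul_le_mul_of_nonneg_left h1 (by positivity)
      _ ≤ G α u r T := h2
      _ ≤ (u + r) ^ T := h3
  exact le_of_mul_le_mul_left h4 (by positivity)

/-- existence of the tilt parameter for the subcritical case -/
lemma exists_t (hα : 0 < α) (hβ : 0 < β) (hαβ : α < β) :
    ∃ t : ℝ, 0 < t ∧ t < β ∧ (1 + t) * (β / t) ^ (α / (1 + α)) < 1 + β := by
  set c : ℝ := α / (1 + α) with hc
  have hc0 : 0 < c := by positivity
  have hcb : c * (1 + β) < β := by
    rw [hc, div_mul_eq_mul_div, div_lt_iff₀ (by positivity)]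
    nlinarith
  set φ : ℝ → ℝ := fun t => (1 + t) * (β * t⁻¹) ^ c with hφ
  have hββ : β * β⁻¹ = 1 := mul_inv_cancel₀ hβ.ne'
  have h1 : HasDerivAt (fun t : ℝ => β * t⁻¹) (β * (-(β ^ 2)⁻¹)) β :=
    (hasDerivAt_inv hβ.ne').const_mul β
  have h2 : HasDerivAt (fun x : ℝ => x ^ c) (c * (β * β⁻¹) ^ (c - 1)) (β * β⁻¹) :=
    Real.hasDerivAt_rpow_const (Or.inl (by rw [hββ]; exact one_ne_zero))
  have h3 : HasDerivAt (fun t : ℝ => (β * t⁻¹) ^ c)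
      (c * (β * β⁻¹) ^ (c - 1) * (β * (-(β ^ 2)⁻¹))) β := HasDerivAt.comp (h := fun t : ℝ => β * t⁻¹) β h2 h1
  have h4 : HasDerivAt (fun t : ℝ => 1 + t) 1 β := by
    simpa using (hasDerivAt_id β).const_add 1
  have h5 : HasDerivAt φ
      (1 * (β * β⁻¹) ^ c + (1 + β) * (c * (β * β⁻¹) ^ (c - 1) * (β * (-(β ^ 2)⁻¹)))) β :=
    h4.mul h3
  have hval : (1 : ℝ) * (β * β⁻¹) ^ c + (1 + β) * (c * (β * β⁻¹) ^ (c - 1) * (β * (-(β ^ 2)⁻¹)))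
      = 1 - c * (1 + β) / β := by
    rw [hββ, Real.one_rpow, Real.one_rpow]
    field_simp
    ring
  rw [hval] at h5
  have hpos : 0 < 1 - c * (1 + β) / β := by
    have : c * (1 + β) / β < 1 := (div_lt_one hβ).mpr hcb
    linarith
  -- slope argument from the left
  have hslope : Tendsto (slope φ β) (𝓝[<] β) (𝓝 (1 - c * (1 + β) / β)) :=
    (hasDerivAt_iff_tendsto_slope.mp h5).mono_left
      (nhdsWithin_mono β (fun x hx => ne_of_lt hx))
  have hev1 : ∀ᶠ t in 𝓝[<] β, 0 < slope φ β t :=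
    hslope.eventually (eventually_gt_nhds hpos)
  have hev2 : ∀ᶠ t in 𝓝[<] β, t ∈ Set.Ioo (0:ℝ) β :=
    Ioo_mem_nhdsLT_of_mem ⟨hβ, le_refl β⟩
  obtain ⟨t, ht1, ht2⟩ := (hev1.and hev2).exists
  refine ⟨t, ht2.1, ht2.2, ?_⟩
  have hlt : φ t < φ β := by
    rw [slope_def_field] at ht1
    by_contra hcon
    push_neg at hcon
    have hnum : 0 ≤ φ t - φ β := by linarith
    have hden : t - β < 0 := by linarith [ht2.2]
    have := div_nonpos_of_nonneg_of_nonpos hnum hden.le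
    linarith
  have hφβ : φ β = 1 + β := by
    show (1 + β) * (β * β⁻¹) ^ c = 1 + β
    rw [hββ, Real.one_rpow, mul_one]
  calc (1 + t) * (β / t) ^ c = φ t := by rw [div_eq_mul_inv]
    _ < φ β := hlt
    _ = 1 + β := hφβ

/-- existence of the tilt parameter for the supercritical case -/
lemma exists_theta (hβ : 0 < β) {γ : ℝ} (hγ : β < γ) :
    ∃ θ : ℝ, 1 < θ ∧ β * θ + θ ^ (-γ) < β + 1 := by
  set ψ : ℝ → ℝ := fun θ => β * θ + θ ^ (-γ) with hψ
  have h1 : HasDerivAt (fun θ : ℝ => β * θ) β 1 := by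
    simpa using (hasDerivAt_id (1:ℝ)).const_mul β
  have h2 : HasDerivAt (fun θ : ℝ => θ ^ (-γ)) (-γ * (1:ℝ) ^ (-γ - 1)) 1 :=
    Real.hasDerivAt_rpow_const (Or.inl one_ne_zero)
  have h3 : HasDerivAt ψ (β + -γ * (1:ℝ) ^ (-γ - 1)) 1 := h1.add h2
  have hval : β + -γ * (1:ℝ) ^ (-γ - 1) = β - γ := by
    rw [Real.one_rpow]; ring
  rw [hval] at h3
  have hneg : β - γ < 0 := by linarith
  have hslope : Tendsto (slope ψ 1) (𝓝[>] 1) (𝓝 (β - γ)) :=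
    (hasDerivAt_iff_tendsto_slope.mp h3).mono_left
      (nhdsWithin_mono 1 (fun x hx => ne_of_gt hx))
  have hev1 : ∀ᶠ θ in 𝓝[>] (1:ℝ), slope ψ 1 θ < 0 :=
    hslope.eventually (eventually_lt_nhds hneg)
  have hev2 : ∀ᶠ θ in 𝓝[>] (1:ℝ), (1:ℝ) < θ := eventually_mem_nhdsWithin.mono (fun x hx => hx)
  obtain ⟨θ, ht1, ht2⟩ := (hev1.and hev2).exists
  refine ⟨θ, ht2, ?_⟩
  have h4 : ψ θ < ψ 1 := by
    rw [slope_def_field] at ht1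
    by_contra hcon
    push_neg at hcon
    have hnum : 0 ≤ ψ θ - ψ 1 := by linarith
    have hden : 0 < θ - 1 := by linarith
    have := div_nonneg hnum hden.le
    linarith
  have hψ1 : ψ 1 = β + 1 := by
    rw [hψ]
    simp only [mul_one, Real.one_rpow]
  rw [hψ1] at h4
  exact h4

end MRW

namespace MRW
open Finset Filter
open scoped Classical Topology

/-- the summand of `crossProbR` -/
noncomputable def aa (β α : ℝ) (n : ℕ) : ℝ :=
  (weakCountR α n : ℝ) * β ^ (⌊α * n⌋₊ + 1) / (β + 1) ^ (n + ⌊α * n⌋₊ + 1)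

variable {α β : ℝ}

lemma crossProbR_eq (β α : ℝ) : crossProbR β α = ∑' n, aa β α n := rfl

lemma a_nonneg (hβ : 0 < β) (α : ℝ) (n : ℕ) : 0 ≤ aa β α n :=
  div_nonneg (mul_nonneg (Nat.cast_nonneg _) (pow_nonneg hβ.le _))
    (pow_nonneg (by linarith) _)

lemma pow_split (hb1 : (0:ℝ) < β + 1) (m n : ℕ) :
    ((β+1):ℝ) ^ (n + m + 1) = (β+1) ^ (m + 1) * (β+1) ^ n := by
  rw [← pow_add]
  congr 1
  omega

theorem crossProb_eq_one (hβ : 0 < β) (hα : 0 < α) (hαβ : α < β) : crossProbR β α = 1 := by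
  have hb1 : (0:ℝ) < β + 1 := by linarith
  set u : ℝ := β / (β + 1) with hu'
  set r : ℝ := 1 / (β + 1) with hr'
  have hu : 0 < u := by positivity
  have hr : 0 < r := by positivity
  have hur : u + r = 1 := by rw [hu', hr']; field_simp
  have hterm : ∀ n : ℕ,
      (weakCountR α n : ℝ) * u ^ (⌊α * (n:ℝ)⌋₊ + 1) * r ^ n = aa β α n := by
    intro n
    rw [aa, hu', hr', div_pow, div_pow, one_pow, pow_split hb1]
    field_simp
  have hnonneg : ∀ n, 0 ≤ aa β α n := fun n => a_nonneg hβ α n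
  have hpartial : ∀ K, ∑ n ∈ Finset.range K, aa β α n ≤ 1 := by
    intro K
    rw [← Finset.sum_congr rfl (fun n _ => hterm n)]
    exact partial_sum_le hα hu hr hur.le K
  have hsummable : Summable (aa β α) := summable_of_sum_range_le hnonneg hpartial
  have hub : ∑' n, aa β α n ≤ 1 := Summable.tsum_le_of_sum_range_le hsummable hpartial
  -- lower bound
  obtain ⟨t, ht0, htβ, hρlt⟩ := exists_t hα hβ hαβ
  set c : ℝ := α / (1 + α) with hc
  set ρ : ℝ := (β / t) ^ c * ((1 + t) / (1 + β)) with hρ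
  have hβt : 1 < β / t := (one_lt_div ht0).mpr htβ
  have hρ0 : 0 ≤ ρ := by
    apply mul_nonneg (Real.rpow_nonneg (div_nonneg hβ.le ht0.le) _)
    positivity
  have hρ1 : ρ < 1 := by
    have h : ρ = ((1 + t) * (β / t) ^ c) / (1 + β) := by rw [hρ]; ring
    rw [h, div_lt_one (by linarith : (0:ℝ) < 1 + β)]
    linarith
  have hNC : ∀ T : ℕ, NC α u r T ≤ ρ ^ T := by
    intro T
    have hpt : ∀ g : Fin T → Bool,
        (if NonX α g then W u r g else 0)
          ≤ (β / t) ^ (c * T) / (β + 1) ^ T * W t 1 g := by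
      intro g
      have hWt : W t 1 g = t ^ upsIn g T := by
        rw [W, one_pow, mul_one]
      by_cases h : NonX α g
      · rw [if_pos h, hWt]
        have hsum := upsIn_add_rightsIn g (le_refl T)
        have hcast : (upsIn g T : ℝ) + rightsIn g T = T := by
          exact_mod_cast congrArg (Nat.cast : ℕ → ℝ) hsum
        have hupsle : (upsIn g T : ℝ) ≤ c * T := by
          have h1 := h T (le_refl T)
          rw [hc, div_mul_eq_mul_div, le_div_iff₀ (by positivity)]
          nlinarith
        have hW : W u r g = β ^ upsIn g T / (β + 1) ^ T := by
          have hTsplit : ((β+1):ℝ) ^ T = (β+1) ^ upsIn g T * (β+1) ^ rightsIn g T := by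
            rw [← pow_add, hsum]
          rw [W, hu', hr', div_pow, div_pow, one_pow, hTsplit]
          field_simp
        rw [hW]
        have hsplit : β ^ upsIn g T = t ^ upsIn g T * (β / t) ^ (upsIn g T : ℕ) := by
          rw [← mul_pow]
          congr 1
          field_simp
        rw [hsplit]
        have hmono : ((β / t) ^ (upsIn g T : ℕ) : ℝ) ≤ (β / t) ^ (c * T) := by
          rw [← Real.rpow_natCast (β / t) (upsIn g T)]
          exact (Real.rpow_le_rpow_left_iff hβt).mpr hupsle
        calc t ^ upsIn g T * (β / t) ^ (upsIn g T : ℕ) / (β + 1) ^ T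
            ≤ t ^ upsIn g T * (β / t) ^ (c * T) / (β + 1) ^ T := by
              gcongr
          _ = (β / t) ^ (c * T) / (β + 1) ^ T * t ^ upsIn g T := by ring
      · rw [if_neg h, hWt]
        apply mul_nonneg
        · apply div_nonneg (Real.rpow_nonneg (div_nonneg hβ.le ht0.le) _) (by positivity)
        · positivity
    calc NC α u r T ≤ ∑ g : Fin T → Bool, (β / t) ^ (c * T) / (β + 1) ^ T * W t 1 g :=
          Finset.sum_le_sum (fun g _ => hpt g)
      _ = (β / t) ^ (c * T) / (β + 1) ^ T * (t + 1) ^ T := by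
          rw [← Finset.mul_sum, sum_W]
      _ = ρ ^ T := by
          rw [hρ, mul_pow, div_pow]
          rw [Real.rpow_mul (div_nonneg hβ.le ht0.le) c (T:ℝ), Real.rpow_natCast]
          rw [show (1 + t) = (t + 1) by ring, show (1 + β) = (β + 1) by ring]
          ring
  have hlow : ∀ T : ℕ, 1 - ρ ^ T ≤ ∑' n, aa β α n := by
    intro T
    have hcore := core (α := α) hα u r T
    rw [hur, one_pow] at hcore
    have hG : G α u r T = ∑ n ∈ (Finset.range T).filter
        (fun n : ℕ => n + ⌊α * (n:ℝ)⌋₊ + 1 ≤ T), aa β α n := by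
      rw [G]
      apply Finset.sum_congr rfl
      intro n _
      rw [hur, one_pow, mul_one, hterm n]
    have hle : G α u r T ≤ ∑' n, aa β α n := by
      rw [hG]
      exact Summable.sum_le_tsum _ (fun i _ => hnonneg i) hsummable
    have hNCT := hNC T
    linarith
  have htend : Tendsto (fun T : ℕ => 1 - ρ ^ T) atTop (𝓝 1) := by
    have := tendsto_pow_atTop_nhds_zero_of_lt_one hρ0 hρ1
    simpa using tendsto_const_nhds.sub this
  have hge : 1 ≤ ∑' n, aa β α n := le_of_tendsto' htend hlow
  rw [crossProbR_eq]
  linarith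

end MRW

namespace MRW
open Finset Filter
open scoped Classical Topology

variable {α β : ℝ}

theorem crossProb_lt_one (hβ : 0 < β) (hα : 0 < α) (hβα : β < α) : crossProbR β α < 1 := by
  have hb1 : (0:ℝ) < β + 1 := by linarith
  set γ : ℝ := (max β (α - 1) + α) / 2 with hγ
  have hβγ : β < γ := by
    have : β ≤ max β (α - 1) := le_max_left _ _
    rw [hγ]; linarith
  have hγα : γ < α := by
    have h1 : max β (α - 1) < α := max_lt hβα (by linarith)
    rw [hγ]; linarith
  set δ : ℝ := α - γ with hδ'
  have hδ0 : 0 < δ := by rw [hδ']; linarith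
  have hδ1 : δ ≤ 1 := by
    have : α - 1 ≤ max β (α - 1) := le_max_right _ _
    rw [hδ', hγ]; linarith
  obtain ⟨θ, hθ1, hθlt⟩ := exists_theta hβ hβγ
  have hθ0 : (0:ℝ) < θ := by linarith
  set u : ℝ := β * θ / (β + 1) with hu'
  set r : ℝ := θ ^ (-γ) / (β + 1) with hr'
  have hu : 0 < u := by positivity
  have hr : 0 < r := by
    apply div_pos (Real.rpow_pos_of_pos hθ0 _) hb1
  have hur : u + r ≤ 1 := by
    rw [hu', hr', ← add_div, div_le_one hb1]
    linarith
  -- key exponent bound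
  have hkey : ∀ n : ℕ, aa β α n * θ ^ δ ≤ (weakCountR α n : ℝ) * u ^ (⌊α * (n:ℝ)⌋₊ + 1) * r ^ n := by
    intro n
    have hexp : (weakCountR α n : ℝ) * u ^ (⌊α * (n:ℝ)⌋₊ + 1) * r ^ n
        = aa β α n * θ ^ ((⌊α * (n:ℝ)⌋₊ + 1 : ℕ) - γ * n : ℝ) := by
      rw [aa, hu', hr', div_pow, div_pow, mul_pow, pow_split hb1]
      rw [← Real.rpow_natCast θ (⌊α * (n:ℝ)⌋₊ + 1), ← Real.rpow_natCast (θ ^ (-γ)) n,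
        ← Real.rpow_mul hθ0.le]
      rw [sub_eq_add_neg, Real.rpow_add hθ0]
      have h9 : (-γ) * (n:ℝ) = -(γ * n) := by ring
      rw [h9]
      field_simp
    rw [hexp]
    have hge : δ ≤ ((⌊α * (n:ℝ)⌋₊ + 1 : ℕ) : ℝ) - γ * n := by
      rcases Nat.eq_zero_or_pos n with hn | hn
      · subst hn
        simp only [Nat.cast_zero, mul_zero, Nat.floor_zero, sub_zero]
        push_cast
        linarith
      · have h1 : α * n < ⌊α * (n:ℝ)⌋₊ + 1 := Nat.lt_floor_add_one _
        have h2 : (1:ℝ) ≤ n := by exact_mod_cast hn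
        have h3 : δ * n ≥ δ := by nlinarith
        have : (α - γ) * n ≤ ((⌊α * (n:ℝ)⌋₊ + 1 : ℕ) : ℝ) - γ * n := by
          push_cast
          nlinarith
        rw [hδ'] at h3 ⊢
        nlinarith
    apply mul_le_mul_of_nonneg_left _ (a_nonneg hβ α n)
    exact (Real.rpow_le_rpow_left_iff hθ1).mpr hge
  have hθδ : 1 < θ ^ δ := by
    rw [Real.one_lt_rpow_iff_of_pos hθ0]
    left; exact ⟨hθ1, hδ0⟩
  have hpartial : ∀ K, ∑ n ∈ Finset.range K, aa β α n ≤ (θ ^ δ)⁻¹ := by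
    intro K
    have h1 : ∑ n ∈ Finset.range K, aa β α n * θ ^ δ ≤ 1 := by
      calc ∑ n ∈ Finset.range K, aa β α n * θ ^ δ
          ≤ ∑ n ∈ Finset.range K, (weakCountR α n : ℝ) * u ^ (⌊α * (n:ℝ)⌋₊ + 1) * r ^ n :=
            Finset.sum_le_sum (fun n _ => hkey n)
        _ ≤ 1 := partial_sum_le hα hu hr hur K
    rw [← Finset.sum_mul] at h1
    rw [inv_eq_one_div, le_div_iff₀ (Real.rpow_pos_of_pos hθ0 δ)]
    exact h1
  have hnonneg : ∀ n, 0 ≤ aa β α n := fun n => a_nonneg hβ α n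
  have hsummable : Summable (aa β α) := summable_of_sum_range_le hnonneg hpartial
  have hub : ∑' n, aa β α n ≤ (θ ^ δ)⁻¹ := Summable.tsum_le_of_sum_range_le hsummable hpartial
  rw [crossProbR_eq]
  calc ∑' n, aa β α n ≤ (θ ^ δ)⁻¹ := hub
    _ < 1 := by
      rw [inv_lt_one_iff₀]
      right; exact hθδ

end MRW

theorem floor_le_critical_slope (β : ℝ) (hβ : 0 < β) :
    (⌊β⌋₊ : ℝ) ≤ sSup {α : ℝ | 0 < α ∧ crossProbR β α = 1} ∧
    sSup {α : ℝ | 0 < α ∧ crossProbR β α = 1} ≤ (⌊β⌋₊ : ℝ) + 1 ∧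
    (1 ≤ ⌊β⌋₊ → (⌊β⌋₊ : ℝ) < β →
      ∃ y ∈ Set.Ioo (0 : ℝ) 1, ∑ i ∈ Finset.range (⌊β⌋₊ + 1), y ^ (i + 1) = β) := by
  have hmem_le : ∀ x ∈ {α : ℝ | 0 < α ∧ crossProbR β α = 1}, x ≤ β := by
    rintro x ⟨hx0, hx1⟩
    by_contra h
    push_neg at h
    exact absurd hx1 (ne_of_lt (MRW.crossProb_lt_one hβ hx0 h))
  have hβp1 : β < (⌊β⌋₊ : ℝ) + 1 := Nat.lt_floor_add_one β
  have hbdd : BddAbove {α : ℝ | 0 < α ∧ crossProbR β α = 1} := ⟨β, hmem_le⟩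
  refine ⟨?_, ?_, ?_⟩
  · -- lower bound
    rcases Nat.eq_zero_or_pos ⌊β⌋₊ with hp | hp
    · rw [hp, Nat.cast_zero]
      exact Real.sSup_nonneg (fun x hx => hx.1.le)
    · have hp1 : (1:ℝ) ≤ (⌊β⌋₊ : ℝ) := by exact_mod_cast hp
      have hpβ : (⌊β⌋₊ : ℝ) ≤ β := Nat.floor_le hβ.le
      apply le_of_forall_pos_le_add
      intro ε hε
      set x : ℝ := (⌊β⌋₊ : ℝ) - min ε (1/2) with hx'
      have hmin0 : 0 < min ε (1/2) := lt_min hε (by norm_num)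
      have hminε : min ε (1/2) ≤ ε := min_le_left _ _
      have hmin12 : min ε (1/2) ≤ 1/2 := min_le_right _ _
      have hx0 : 0 < x := by rw [hx']; linarith
      have hxβ : x < β := by rw [hx']; linarith
      have hxS : x ∈ {α : ℝ | 0 < α ∧ crossProbR β α = 1} :=
        ⟨hx0, MRW.crossProb_eq_one hβ hx0 hxβ⟩
      have hle := le_csSup hbdd hxS
      rw [hx'] at hle
      linarith
  · -- upper bound
    exact Real.sSup_le (fun x hx => le_trans (hmem_le x hx) (by linarith)) (by positivity)
  · -- root existence
    intro _ _
    set p := ⌊β⌋₊ with hp'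
    set f : ℝ → ℝ := fun y => ∑ i ∈ Finset.range (p + 1), y ^ (i + 1) with hf'
    have hcont : Continuous f := by
      apply continuous_finset_sum
      intro i _
      exact continuous_pow (i + 1)
    have hf0 : f 0 = 0 := by
      rw [hf']
      simp
    have hf1 : f 1 = (p : ℝ) + 1 := by
      rw [hf']
      simp
    have hmem : β ∈ Set.Ioo (f 0) (f 1) := by
      rw [hf0, hf1]
      exact ⟨hβ, hβp1⟩
    obtain ⟨y, hy, hfy⟩ := intermediate_value_Ioo (by norm_num : (0:ℝ) ≤ 1)
      hcont.continuousOn hmem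
    exact ⟨y, hy, hfy⟩
end
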